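/- arXiv:1408.0948 — 7 statements merged into one kernel-verified Lean document; each statement's English description precedes it below -/
import Mathlib

section
/- For every n ∈ ℕ, the Boolean quadratic polytope conv(BQP_n) is affinely equivalent to an exposed face of conv(BQP_{n+1}); concretely, the set F = conv(BQP_{n+1}) ∩ {x : x_{(n+1)(n+1)} = 0} is an exposed face of conv(BQP_{n+1}), and there is an injective affine map φ from the coordinate space of BQP_n to that of BQP_{n+1} with φ(conv(BQP_n)) = F. -/
/-- Index set `Δ_n = {(i,j) : 1 ≤ i ≤ j ≤ n}` for Boolean quadratic polytopes. -/
def Idx (n : ℕ) : Type := {p : Fin n × Fin n // p.1 ≤ p.2}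

/-- The vertex set of the Boolean quadratic polytope:
0/1 vectors with `x_{ij} = x_{ii} * x_{jj}` for `i < j`. -/
def BQP (n : ℕ) : Set (Idx n → ℝ) :=
  {x | (∀ p, x p = 0 ∨ x p = 1) ∧
       ∀ (i j : Fin n) (h : i < j),
         x ⟨(i, j), le_of_lt h⟩ = x ⟨(i, i), le_refl i⟩ * x ⟨(j, j), le_refl j⟩}

namespace Aux

/-- restriction of an index of `Idx (n+1)` lying in the top-left block -/
def restr {n : ℕ} (q : Idx (n+1)) (h : (q.val.2 : ℕ) < n) : Idx n :=
  ⟨(⟨q.val.1, lt_of_le_of_lt q.prop h⟩, ⟨q.val.2, h⟩), q.prop⟩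

def emb {n : ℕ} (p : Idx n) : Idx (n+1) :=
  ⟨(p.val.1.castSucc, p.val.2.castSucc), by
    simpa [Fin.castSucc_le_castSucc_iff] using p.prop⟩

def phiFun {n : ℕ} (x : Idx n → ℝ) : Idx (n+1) → ℝ :=
  fun q => if h : (q.val.2 : ℕ) < n then x (restr q h) else 0

def phiL (n : ℕ) : (Idx n → ℝ) →ₗ[ℝ] (Idx (n+1) → ℝ) where
  toFun := phiFun
  map_add' x y := funext fun q => by
    simp only [phiFun, Pi.add_apply]
    split <;> simp
  map_smul' c x := funext fun q => by
    simp only [phiFun, Pi.smul_apply, RingHom.id_apply, smul_eq_mul]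
    split <;> simp

lemma phi_emb {n : ℕ} (x : Idx n → ℝ) (p : Idx n) : phiFun x (emb p) = x p := by
  unfold phiFun
  have h : ((emb p).val.2 : ℕ) < n := p.val.2.isLt
  rw [dif_pos h]
  congr 1

lemma phi_inj (n : ℕ) : Function.Injective (phiFun (n := n)) := by
  intro x y h
  funext p
  have := congrFun h (emb p)
  rwa [phi_emb, phi_emb] at this

end Aux
namespace Aux

lemma zero_mem_BQP (m : ℕ) : (0 : Idx m → ℝ) ∈ BQP m := by
  constructor
  · intro p; left; rfl
  · intro i j h; exact (mul_zero (0:ℝ)).symm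

lemma nonneg_on_hull {m : ℕ} (c : Idx m) {x : Idx m → ℝ}
    (hx : x ∈ convexHull ℝ (BQP m)) : 0 ≤ x c := by
  have : convexHull ℝ (BQP m) ⊆ {y : Idx m → ℝ | 0 ≤ y c} := by
    apply convexHull_min
    · intro y hy
      rcases hy.1 c with h | h <;> simp [Set.mem_setOf_eq, h]
    · exact convex_halfSpace_ge (by exact (LinearMap.proj c : (Idx m → ℝ) →ₗ[ℝ] ℝ).isLinear) 0
  exact this hx

/-- key face lemma -/
lemma hull_inter (m : ℕ) (c : Idx m) :
    convexHull ℝ (BQP m) ∩ {x | x c = 0}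
      = convexHull ℝ (BQP m ∩ {x | x c = 0}) := by
  apply Set.Subset.antisymm
  · rintro x ⟨hx, hxc⟩
    rw [convexHull_eq] at hx
    obtain ⟨ι, t, w, z, hw, hw1, hz, hcm⟩ := hx
    have hxc' : ∑ i ∈ t, w i * z i c = 0 := by
      have := congrFun (congrArg (fun v => v) hcm) c
      rw [Finset.centerMass, hw1, inv_one, one_smul] at hcm
      have : x c = ∑ i ∈ t, w i * z i c := by
        rw [← hcm]; simp [Finset.sum_apply]
      rw [← this, hxc]
    have hterm : ∀ i ∈ t, w i * z i c = 0 :=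
      (Finset.sum_eq_zero_iff_of_nonneg (fun i hi =>
        mul_nonneg (hw i hi) (by rcases (hz i hi).1 c with h | h <;> simp [h]))).mp hxc'
    set t' := t.filter (fun i => w i ≠ 0) with ht'
    have hsum' : ∑ i ∈ t', w i = 1 := by
      rw [ht', Finset.sum_filter_ne_zero, hw1]
    have hcm' : t'.centerMass w z = x := by
      rw [← hcm, Finset.centerMass, Finset.centerMass, hsum', hw1]
      congr 1
      rw [ht']
      apply Finset.sum_filter_of_ne
      intro i hi hne
      intro h0
      rw [h0, zero_smul] at hne
      exact hne rfl
    rw [← hcm']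
    apply Finset.centerMass_mem_convexHull
    · intro i hi; exact hw i (Finset.mem_filter.mp hi).1
    · rw [hsum']; norm_num
    · intro i hi
      rcases Finset.mem_filter.mp hi with ⟨hit, hwi⟩
      refine ⟨hz i hit, ?_⟩
      have := hterm i hit
      rcases mul_eq_zero.mp this with h | h
      · exact absurd h hwi
      · exact h
  · apply Set.subset_inter
    · exact convexHull_mono Set.inter_subset_left
    · have : convexHull ℝ (BQP m ∩ {x | x c = 0}) ⊆ {x : Idx m → ℝ | x c = 0} := by
        apply convexHull_min
        · exact Set.inter_subset_right
        · exact (convex_hyperplane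
            (by exact (LinearMap.proj c : (Idx m → ℝ) →ₗ[ℝ] ℝ).isLinear) 0)
      exact this

end Aux
namespace Aux

variable {n : ℕ}

lemma eq_last {j : Fin (n+1)} (h : ¬ (j : ℕ) < n) : j = Fin.last n :=
  Fin.ext (le_antisymm (Nat.lt_succ_iff.mp j.isLt) (not_lt.mp h))

lemma image_eq (n : ℕ) :
    phiFun '' BQP n
      = BQP (n+1) ∩ {x | x ⟨(Fin.last n, Fin.last n), le_refl _⟩ = 0} := by
  apply Set.Subset.antisymm
  · rintro _ ⟨x, hx, rfl⟩
    refine ⟨⟨?_, ?_⟩, ?_⟩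
    · intro q
      unfold phiFun
      split
      · exact hx.1 _
      · left; rfl
    · intro i j hij
      by_cases hj : (j : ℕ) < n
      · have hi : (i : ℕ) < n := lt_trans hij hj
        show phiFun x _ = phiFun x _ * phiFun x _
        unfold phiFun
        rw [dif_pos hj, dif_pos hi, dif_pos hj]
        exact hx.2 ⟨i, hi⟩ ⟨j, hj⟩ hij
      · show phiFun x _ = phiFun x _ * phiFun x _
        unfold phiFun
        rw [dif_neg hj, dif_neg hj, mul_zero]
    · show phiFun x _ = 0
      unfold phiFun
      rw [dif_neg (by simp [Fin.last])]
  · rintro v ⟨hv, hvc⟩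
    refine ⟨fun p => v (emb p), ⟨?_, ?_⟩, ?_⟩
    · intro p; exact hv.1 _
    · intro i j hij
      exact hv.2 i.castSucc j.castSucc (by simpa using hij)
    · funext q
      unfold phiFun
      split
      · next h =>
        have : emb (restr q h) = q := by
          apply Subtype.ext
          apply Prod.ext <;> apply Fin.ext <;> rfl
        show v (emb (restr q h)) = v q
        rw [this]
      · next h =>
        have h2 : q.val.2 = Fin.last n := eq_last h
        by_cases h1 : (q.val.1 : ℕ) < n
        · have hlt : q.val.1 < q.val.2 := by
            rw [h2]; exact Fin.lt_last_iff_ne_last.mpr (by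
              intro hc; rw [hc] at h1; simp [Fin.last] at h1)
          have := hv.2 q.val.1 q.val.2 hlt
          have hq : q = ⟨(q.val.1, q.val.2), le_of_lt hlt⟩ := by
            apply Subtype.ext; rfl
          rw [hq, this]
          have : v ⟨(q.val.2, q.val.2), le_refl _⟩ = 0 := by
            rw [show (⟨(q.val.2, q.val.2), le_refl _⟩ : Idx (n+1))
                  = ⟨(Fin.last n, Fin.last n), le_refl _⟩ by
              apply Subtype.ext; rw [h2]]
            exact hvc
          rw [this, mul_zero]
        · have h1' : q.val.1 = Fin.last n := eq_last h1
          have hq : q = ⟨(Fin.last n, Fin.last n), le_refl _⟩ := by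
            apply Subtype.ext
            apply Prod.ext
            · exact h1'
            · exact h2
          rw [hq]; exact hvc.symm

end Aux

/-- `conv(BQP_n)` is affinely equivalent to the exposed face
`conv(BQP_{n+1}) ∩ {x : x_{(n+1)(n+1)} = 0}` of `conv(BQP_{n+1})`. -/
theorem stmt0 (n : ℕ) :
    IsExposed ℝ (convexHull ℝ (BQP (n + 1)))
      (convexHull ℝ (BQP (n + 1)) ∩
        {x | x ⟨(Fin.last n, Fin.last n), le_refl _⟩ = 0}) ∧
    ∃ φ : (Idx n → ℝ) →ᵃ[ℝ] (Idx (n + 1) → ℝ),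
      Function.Injective φ ∧
      φ '' (convexHull ℝ (BQP n)) =
        convexHull ℝ (BQP (n + 1)) ∩
          {x | x ⟨(Fin.last n, Fin.last n), le_refl _⟩ = 0} := by
  set c : Idx (n+1) := ⟨(Fin.last n, Fin.last n), le_refl _⟩ with hc
  constructor
  · intro _
    refine ⟨-(ContinuousLinearMap.proj c), ?_⟩
    ext x
    constructor
    · rintro ⟨hx, hxc⟩
      refine ⟨hx, fun y hy => ?_⟩
      simp only [ContinuousLinearMap.neg_apply, ContinuousLinearMap.proj_apply,
        neg_le_neg_iff]
      rw [Set.mem_setOf_eq] at hxc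
      rw [hxc]
      exact Aux.nonneg_on_hull c hy
    · rintro ⟨hx, hmax⟩
      refine ⟨hx, ?_⟩
      have h0 : (0 : Idx (n+1) → ℝ) ∈ convexHull ℝ (BQP (n+1)) :=
        subset_convexHull ℝ _ (Aux.zero_mem_BQP (n+1))
      have := hmax 0 h0
      simp only [ContinuousLinearMap.neg_apply, ContinuousLinearMap.proj_apply,
        Pi.zero_apply, neg_zero, le_neg] at this
      have hge := Aux.nonneg_on_hull c hx
      rw [Set.mem_setOf_eq]
      linarith
  · refine ⟨(Aux.phiL n).toAffineMap, ?_, ?_⟩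
    · exact Aux.phi_inj n
    · have hco : ⇑(Aux.phiL n).toAffineMap = Aux.phiFun := rfl
      rw [AffineMap.image_convexHull, hco, Aux.image_eq]
      exact (Aux.hull_inter (n+1) c).symm
end

section
/- For every n ≥ 1 there exists a simple graph G on k = n(n+1) vertices such that conv(BQP_n) is affinely equivalent to an exposed face of the stable set polytope conv(SSP(G)): there is an exposed face F of conv(SSP(G)) and an injective affine map φ : ℝ^{Δ_n} → ℝ^k with φ(conv(BQP_n)) = F. -/
/-- The vertex set of the stable set polytope of a simple graph `G` on `Fin k`. -/
def SSP {k : ℕ} (G : SimpleGraph (Fin k)) : Set (Fin k → ℝ) :=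
  {y | (∀ i, y i = 0 ∨ y i = 1) ∧ ∀ i j, G.Adj i j → y i + y j ≤ 1}

namespace BQPStmt

instance (n : ℕ) : DecidableEq (Idx n) :=
  inferInstanceAs (DecidableEq {p : Fin n × Fin n // p.1 ≤ p.2})
instance (n : ℕ) : Fintype (Idx n) :=
  inferInstanceAs (Fintype {p : Fin n × Fin n // p.1 ≤ p.2})

variable {n : ℕ}

/-- first index of a pair -/
def fst (p : Idx n) : Fin n := p.1.1
/-- second index of a pair -/
def snd (p : Idx n) : Fin n := p.1.2

lemma fst_le_snd (p : Idx n) : (fst p).1 ≤ (snd p).1 := p.2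

/-- diagonal element -/
def dg (j : Fin n) : Idx n := ⟨(j, j), le_refl j⟩

lemma dg_of_diag {p : Idx n} (h : fst p = snd p) : p = dg (snd p) := by
  apply Subtype.ext
  apply Prod.ext
  · exact h
  · rfl

/-- `Idx n` as a sigma type. -/
def eIdx (n : ℕ) : Idx n ≃ Σ j : Fin n, Fin (j.1 + 1) where
  toFun p := ⟨snd p, ⟨(fst p).1, Nat.lt_succ_of_le (fst_le_snd p)⟩⟩
  invFun q := ⟨(⟨q.2.1, lt_of_le_of_lt (Nat.lt_succ_iff.mp q.2.2) q.1.2⟩, q.1),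
                Nat.lt_succ_iff.mp q.2.2⟩
  left_inv p := rfl
  right_inv q := rfl

lemma card_idx (n : ℕ) : 2 * Fintype.card (Idx n) = n * (n + 1) := by
  have h1 : Fintype.card (Idx n) = ∑ j : Fin n, (j.1 + 1) := by
    rw [Fintype.card_congr (eIdx n), Fintype.card_sigma]
    simp
  rw [h1, Fin.sum_univ_eq_sum_range (fun j => j + 1)]
  have h2 := Finset.sum_range_id_mul_two (n + 1)
  rw [Finset.sum_range_succ', Nat.add_sub_cancel, Nat.mul_comm (n + 1) n] at h2
  omega

/-- The vertex equivalence. -/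
noncomputable def vE (n : ℕ) : Idx n × Bool ≃ Fin (n * (n + 1)) :=
  Fintype.equivFinOfCardEq (by
    rw [Fintype.card_prod, Fintype.card_bool]
    have := card_idx n
    omega)

/-- Conflict relation generating the graph. -/
def conf (u v : Idx n × Bool) : Prop :=
  (u.1 = v.1 ∧ u.2 ≠ v.2) ∨
  ((fst u.1).1 < (snd u.1).1 ∧ fst v.1 = snd v.1 ∧
    ((u.2 = true ∧ v.2 = false ∧ (fst v.1 = fst u.1 ∨ fst v.1 = snd u.1)) ∨
     (u.2 = false ∧ v.2 = true ∧ fst v.1 = fst u.1) ∨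
     (u.2 = false ∧ v.2 = false ∧ fst v.1 = snd u.1)))

def G0 (n : ℕ) : SimpleGraph (Idx n × Bool) := SimpleGraph.fromRel conf

noncomputable def Gr (n : ℕ) : SimpleGraph (Fin (n * (n + 1))) :=
  (G0 n).comap (vE n).symm

/-- The big constant. -/
def Mc (n : ℕ) : ℝ := (n : ℝ) * n

/-- weights of the linear functional -/
noncomputable def wt (n : ℕ) : Idx n × Bool → ℝ := fun u =>
  if fst u.1 = snd u.1 then (if u.2 then Mc n - (fst u.1).1 else Mc n) else 1

/-- linear part of the coordinate map -/
def lval (x : Idx n → ℝ) : Idx n × Bool → ℝ := fun u =>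
  if u.2 = true then x u.1
  else if fst u.1 = snd u.1 then - x u.1 else x (dg (snd u.1)) - x u.1

def cst (n : ℕ) : Idx n × Bool → ℝ := fun u =>
  if u.2 = false ∧ fst u.1 = snd u.1 then 1 else 0

def φL (n : ℕ) : (Idx n → ℝ) →ₗ[ℝ] ((Idx n × Bool) → ℝ) where
  toFun x := lval x
  map_add' x y := by
    funext u
    simp only [lval, Pi.add_apply]
    split_ifs <;> ring
  map_smul' c x := by
    funext u
    simp only [lval, Pi.smul_apply, smul_eq_mul, RingHom.id_apply]
    split_ifs <;> ring

/-- The affine coordinate map into `(Idx n × Bool) → ℝ`. -/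
noncomputable def φA (n : ℕ) : (Idx n → ℝ) →ᵃ[ℝ] ((Idx n × Bool) → ℝ) where
  toFun x := φL n x + cst n
  linear := φL n
  map_vadd' p v := by
    show φL n (v + p) + cst n = φL n v + (φL n p + cst n)
    rw [map_add]; abel

/-- The affine coordinate map into `Fin (n*(n+1)) → ℝ`. -/
noncomputable def φF (n : ℕ) : (Idx n → ℝ) →ᵃ[ℝ] (Fin (n * (n + 1)) → ℝ) :=
  ((LinearMap.funLeft ℝ ℝ (vE n).symm).toAffineMap).comp (φA n)

/-- The linear functional on vertex functions. -/
noncomputable def ℓ0 (n : ℕ) : ((Idx n × Bool) → ℝ) →ₗ[ℝ] ℝ where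
  toFun z := ∑ v, wt n v * z v
  map_add' z w := by
    simp only [Pi.add_apply, mul_add]
    rw [Finset.sum_add_distrib]
  map_smul' c z := by
    simp only [Pi.smul_apply, smul_eq_mul, RingHom.id_apply, Finset.mul_sum]
    exact Finset.sum_congr rfl (fun v _ => by ring)

/-- The exposing functional. -/
noncomputable def ℓF (n : ℕ) : (Fin (n * (n + 1)) → ℝ) →L[ℝ] ℝ :=
  LinearMap.toContinuousLinearMap ((ℓ0 n).comp (LinearMap.funLeft ℝ ℝ (vE n)))

lemma ℓF_apply (y : Fin (n * (n + 1)) → ℝ) : ℓF n y = ℓ0 n (fun v => y (vE n v)) := rfl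

lemma φF_apply (x : Idx n → ℝ) (v : Idx n × Bool) :
    φF n x (vE n v) = φA n x v := by
  show φA n x ((vE n).symm (vE n v)) = φA n x v
  rw [Equiv.symm_apply_apply]

lemma φA_true (x : Idx n → ℝ) (p : Idx n) : φA n x (p, true) = x p := by
  show lval x (p, true) + cst n (p, true) = x p
  simp [lval, cst]

lemma φA_false_diag (x : Idx n → ℝ) {p : Idx n} (h : fst p = snd p) :
    φA n x (p, false) = 1 - x p := by
  show lval x (p, false) + cst n (p, false) = 1 - x p
  simp [lval, cst, h]
  ring

lemma φA_false_off (x : Idx n → ℝ) {p : Idx n} (h : ¬ fst p = snd p) :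
    φA n x (p, false) = x (dg (snd p)) - x p := by
  show lval x (p, false) + cst n (p, false) = _
  simp [lval, cst, h]

/-! ### Adjacency facts -/

def pr {i j : Fin n} (h : i ≤ j) : Idx n := ⟨(i, j), h⟩

lemma adj_of_conf {u v : Idx n × Bool} (hne : u ≠ v) (h : conf u v) : (G0 n).Adj u v := by
  rw [G0, SimpleGraph.fromRel_adj]
  exact ⟨hne, Or.inl h⟩

section AdjLemmas

variable {i j : Fin n} (h : i < j)

lemma adj_ab (j : Fin n) : (G0 n).Adj (dg j, true) (dg j, false) :=
  adj_of_conf (by simp) (Or.inl ⟨rfl, by simp⟩)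

lemma adj_cd : (G0 n).Adj (pr h.le, true) (pr h.le, false) :=
  adj_of_conf (by simp) (Or.inl ⟨rfl, by simp⟩)

lemma fst_pr : fst (pr h.le) = i := rfl
lemma snd_pr : snd (pr h.le) = j := rfl

lemma adj_cbi : (G0 n).Adj (pr h.le, true) (dg i, false) :=
  adj_of_conf (by simp) (Or.inr ⟨h, rfl, Or.inl ⟨rfl, rfl, Or.inl rfl⟩⟩)

lemma adj_cbj : (G0 n).Adj (pr h.le, true) (dg j, false) :=
  adj_of_conf (by simp) (Or.inr ⟨h, rfl, Or.inl ⟨rfl, rfl, Or.inr rfl⟩⟩)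

lemma adj_dai : (G0 n).Adj (pr h.le, false) (dg i, true) :=
  adj_of_conf (by simp) (Or.inr ⟨h, rfl, Or.inr (Or.inl ⟨rfl, rfl, rfl⟩)⟩)

lemma adj_dbj : (G0 n).Adj (pr h.le, false) (dg j, false) := by
  refine adj_of_conf ?_ (Or.inr ⟨h, rfl, Or.inr (Or.inr ⟨rfl, rfl, rfl⟩)⟩)
  intro hEq
  have h2 : fst (pr h.le) = fst (dg j) := congrArg (fun w => fst w.1) hEq
  exact absurd h2 (Fin.ne_of_lt h)

end AdjLemmas

/-! ### The combinatorial bound -/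

def good (n : ℕ) (z : (Idx n × Bool) → ℝ) : Prop :=
  (∀ v, z v = 0 ∨ z v = 1) ∧ ∀ u v, (G0 n).Adj u v → z u + z v ≤ 1

lemma pair_bound {z : (Idx n × Bool) → ℝ} (hz : good n z) {i j : Fin n} (h : i < j) :
    z (pr h.le, true) + z (pr h.le, false) ≤ 1 - z (dg j, false) := by
  have e1 := hz.2 _ _ (adj_cd h)
  have e2 := hz.2 _ _ (adj_cbj h)
  have e4 := hz.2 _ _ (adj_dbj h)
  rcases hz.1 (dg j, false) with hb | hb <;>
    rcases hz.1 (pr h.le, true) with hc | hc <;>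
      rcases hz.1 (pr h.le, false) with hd | hd <;> rw [hb, hc, hd] <;> linarith [e1, e2, e4]

def idxOf (j : Fin n) (i : Fin (j.1 + 1)) : Idx n := (eIdx n).symm ⟨j, i⟩

/-- per-pair weighted contribution -/
noncomputable def fC (n : ℕ) (z : (Idx n × Bool) → ℝ) : Idx n → ℝ :=
  fun p => wt n (p, true) * z (p, true) + wt n (p, false) * z (p, false)

lemma ℓ0_eq (z : (Idx n × Bool) → ℝ) :
    ℓ0 n z = ∑ j : Fin n, ∑ i : Fin (j.1 + 1), fC n z (idxOf j i) := by
  show ∑ v : Idx n × Bool, wt n v * z v = _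
  rw [Fintype.sum_prod_type]
  have h1 : ∀ p : Idx n, ∑ b : Bool, wt n (p, b) * z (p, b) = fC n z p := by
    intro p; rw [Fintype.sum_bool]; rfl
  rw [Finset.sum_congr rfl (fun p _ => h1 p)]
  rw [← Equiv.sum_comp (eIdx n).symm (fC n z)]
  rw [← Finset.univ_sigma_univ, Finset.sum_sigma]
  rfl

lemma idxOf_last (j : Fin n) : idxOf j (Fin.last j.1) = dg j := rfl

def emb (j : Fin n) (i : Fin j.1) : Fin n := ⟨i.1, i.2.trans j.2⟩

lemma emb_lt (j : Fin n) (i : Fin j.1) : emb j i < j := by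
  simpa [emb, Fin.lt_def] using i.2

lemma idxOf_castSucc (j : Fin n) (i : Fin j.1) :
    idxOf j i.castSucc = pr (emb_lt j i).le := rfl

lemma fC_dg (z : (Idx n × Bool) → ℝ) (j : Fin n) :
    fC n z (dg j) = (Mc n - j.1) * z (dg j, true) + Mc n * z (dg j, false) := by
  simp [fC, wt, dg, fst, snd]

lemma fC_off (z : (Idx n × Bool) → ℝ) {i j : Fin n} (h : i < j) :
    fC n z (pr h.le) = z (pr h.le, true) + z (pr h.le, false) := by
  have hne : ¬ fst (pr h.le) = snd (pr h.le) := Fin.ne_of_lt h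
  simp [fC, wt, hne]

lemma j_lt_Mc (j : Fin n) : (j.1 : ℝ) < Mc n := by
  have h1 : j.1 < n := j.2
  have h2 : n ≤ n * n := Nat.le_mul_of_pos_left n (by omega)
  have : (j.1 : ℝ) < (n : ℝ) := by exact_mod_cast h1
  have : ((n : ℕ) : ℝ) ≤ (n : ℝ) * n := by exact_mod_cast h2
  unfold Mc; linarith

lemma row_le {z : (Idx n × Bool) → ℝ} (hz : good n z) (j : Fin n) :
    ∑ i : Fin (j.1 + 1), fC n z (idxOf j i) ≤ Mc n := by
  rw [Fin.sum_univ_castSucc]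
  have hsum : ∑ i : Fin j.1, fC n z (idxOf j i.castSucc)
      ≤ (j.1 : ℝ) * (1 - z (dg j, false)) := by
    calc ∑ i : Fin j.1, fC n z (idxOf j i.castSucc)
        ≤ ∑ _i : Fin j.1, (1 - z (dg j, false)) := by
          apply Finset.sum_le_sum
          intro i _
          rw [idxOf_castSucc, fC_off z (emb_lt j i)]
          exact pair_bound hz (emb_lt j i)
      _ = (j.1 : ℝ) * (1 - z (dg j, false)) := by
          rw [Finset.sum_const, Finset.card_univ, Fintype.card_fin, nsmul_eq_mul]
  rw [idxOf_last, fC_dg]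
  have hAB := hz.2 _ _ (adj_ab j)
  have hj := j_lt_Mc j
  rcases hz.1 (dg j, true) with hA | hA <;> rcases hz.1 (dg j, false) with hB | hB <;>
    simp only [hA, hB] at hsum hAB ⊢ <;> linarith [hsum, hAB, hj]

lemma ℓ0_le {z : (Idx n × Bool) → ℝ} (hz : good n z) : ℓ0 n z ≤ Mc n * n := by
  rw [ℓ0_eq]
  calc ∑ j : Fin n, ∑ i : Fin (j.1 + 1), fC n z (idxOf j i)
      ≤ ∑ _j : Fin n, Mc n := Finset.sum_le_sum (fun j _ => row_le hz j)
    _ = Mc n * n := by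
        rw [Finset.sum_const, Finset.card_univ, Fintype.card_fin, nsmul_eq_mul]; ring

/-! ### Values of `φ` on BQP points -/

lemma fin_lt_of_val {i j : Fin n} (h : i.1 < j.1) : i < j := h

lemma bqp_prod {x : Idx n → ℝ} (hx : x ∈ BQP n) (p : Idx n) :
    x p = x (dg (fst p)) * x (dg (snd p)) := by
  rcases Nat.lt_or_ge (fst p).1 (snd p).1 with h | h
  · exact hx.2 (fst p) (snd p) (fin_lt_of_val h)
  · have hd : fst p = snd p := Fin.ext (le_antisymm (fst_le_snd p) h)
    have hp : p = dg (snd p) := dg_of_diag hd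
    rw [hd, ← hp]
    rcases hx.1 p with h0 | h0 <;> rw [h0] <;> norm_num

lemma ℓ0_phi (x : Idx n → ℝ) : ℓ0 n (φA n x) = Mc n * n := by
  rw [ℓ0_eq]
  have hrow : ∀ j : Fin n,
      ∑ i : Fin (j.1 + 1), fC n (φA n x) (idxOf j i) = Mc n := by
    intro j
    rw [Fin.sum_univ_castSucc, idxOf_last, fC_dg]
    have h1 : ∀ i : Fin j.1, fC n (φA n x) (idxOf j i.castSucc) = x (dg j) := by
      intro i
      rw [idxOf_castSucc, fC_off _ (emb_lt j i)]
      have hne : ¬ fst (pr (emb_lt j i).le) = snd (pr (emb_lt j i).le) :=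
        Fin.ne_of_lt (emb_lt j i)
      rw [φA_true, φA_false_off _ hne]
      show x _ + (x (dg j) - x _) = x (dg j)
      ring
    rw [Finset.sum_congr rfl (fun i _ => h1 i), Finset.sum_const, Finset.card_univ,
      Fintype.card_fin, nsmul_eq_mul]
    rw [φA_true, φA_false_diag _ (rfl : fst (dg j) = snd (dg j))]
    show (j.1 : ℝ) * x (dg j) + ((Mc n - j.1) * x (dg j) + Mc n * (1 - x (dg j))) = Mc n
    ring
  rw [Finset.sum_congr rfl (fun j _ => hrow j), Finset.sum_const, Finset.card_univ,
    Fintype.card_fin, nsmul_eq_mul]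
  ring

lemma phi_good {x : Idx n → ℝ} (hx : x ∈ BQP n) : good n (φA n x) := by
  have h01 : ∀ i : Fin n, x (dg i) = 0 ∨ x (dg i) = 1 := fun i => hx.1 (dg i)
  constructor
  · rintro ⟨p, b⟩
    cases b
    · by_cases hd : fst p = snd p
      · rw [φA_false_diag _ hd]
        rcases hx.1 p with h0 | h0 <;> rw [h0] <;> norm_num
      · rw [φA_false_off _ hd, bqp_prod hx p]
        rcases h01 (fst p) with h1 | h1 <;> rcases h01 (snd p) with h2 | h2 <;>
          rw [h1, h2] <;> norm_num
    · rw [φA_true]; exact hx.1 p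
  · have key : ∀ u v, conf u v → φA n x u + φA n x v ≤ 1 := by
      rintro ⟨p, bp⟩ ⟨q, bq⟩ hconf
      rcases hconf with ⟨h1, h2⟩ | ⟨h1, h2, h3⟩
      · -- same pair, complementary coordinates
        simp only at h1 h2
        subst h1
        have hpq : (bp = true ∧ bq = false) ∨ (bp = false ∧ bq = true) := by
          cases bp <;> cases bq <;> simp_all
        have main : φA n x (p, true) + φA n x (p, false) ≤ 1 := by
          by_cases hd : fst p = snd p
          · rw [φA_true, φA_false_diag _ hd]; ring_nf; norm_num
          · rw [φA_true, φA_false_off _ hd]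
            rcases h01 (snd p) with h2 | h2 <;> rw [h2] <;> norm_num
        rcases hpq with ⟨ha, hb⟩ | ⟨ha, hb⟩ <;> subst ha <;> subst hb
        · exact main
        · linarith [main]
      · -- pair–diagonal conflicts
        simp only at h1 h2 h3 ⊢
        have hq : q = dg (snd q) := dg_of_diag h2
        have hxq : x q = x (dg (fst q)) := by conv_lhs => rw [hq, ← h2]
        have hne : ¬ fst p = snd p := Fin.ne_of_lt (fin_lt_of_val h1)
        have hprod := bqp_prod hx p
        rcases h3 with ⟨hb1, hb2, hfq⟩ | ⟨hb1, hb2, hfq⟩ | ⟨hb1, hb2, hfq⟩ <;>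
          subst hb1 <;> subst hb2
        · rw [φA_true, φA_false_diag _ h2, hxq]
          rcases hfq with hfq | hfq <;> rw [hfq, hprod] <;>
            rcases h01 (fst p) with hsi | hsi <;> rcases h01 (snd p) with hsj | hsj <;>
              rw [hsi, hsj] <;> norm_num
        · rw [φA_false_off _ hne, φA_true, hxq, hfq, hprod] <;>
            rcases h01 (fst p) with hsi | hsi <;> rcases h01 (snd p) with hsj | hsj <;>
              rw [hsi, hsj] <;> norm_num
        · rw [φA_false_off _ hne, φA_false_diag _ h2, hxq, hfq, hprod] <;>
            rcases h01 (fst p) with hsi | hsi <;> rcases h01 (snd p) with hsj | hsj <;>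
              rw [hsi, hsj] <;> norm_num
    intro u v hadj
    rw [G0, SimpleGraph.fromRel_adj] at hadj
    rcases hadj.2 with hc | hc
    · exact key u v hc
    · linarith [key v u hc]

/-! ### Equality case: extraction of a BQP point -/

lemma row_eq_parts {z : (Idx n × Bool) → ℝ} (hz : good n z) (j : Fin n)
    (hr : ∑ i : Fin (j.1 + 1), fC n z (idxOf j i) = Mc n) :
    (z (dg j, true) + z (dg j, false) = 1) ∧
      ∀ i : Fin j.1, z (idxOf j i.castSucc, true) + z (idxOf j i.castSucc, false)
        = z (dg j, true) := by
  rw [Fin.sum_univ_castSucc, idxOf_last, fC_dg] at hr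
  have hfc : ∀ i : Fin j.1, fC n z (idxOf j i.castSucc)
      = z (idxOf j i.castSucc, true) + z (idxOf j i.castSucc, false) := by
    intro i
    rw [idxOf_castSucc, fC_off z (emb_lt j i)]
  rw [Finset.sum_congr rfl (fun i _ => hfc i)] at hr
  have hub : ∀ i : Fin j.1, z (idxOf j i.castSucc, true) + z (idxOf j i.castSucc, false)
      ≤ 1 - z (dg j, false) := by
    intro i
    rw [idxOf_castSucc]
    exact pair_bound hz (emb_lt j i)
  have hnn : ∀ i : Fin j.1, 0 ≤ z (idxOf j i.castSucc, true) + z (idxOf j i.castSucc, false) := by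
    intro i
    rcases hz.1 (idxOf j i.castSucc, true) with h1 | h1 <;>
      rcases hz.1 (idxOf j i.castSucc, false) with h2 | h2 <;> rw [h1, h2] <;> norm_num
  have hAB := hz.2 _ _ (adj_ab j)
  have hj := j_lt_Mc j
  have hsumub : ∑ i : Fin j.1, (z (idxOf j i.castSucc, true) + z (idxOf j i.castSucc, false))
      ≤ (j.1 : ℝ) * (1 - z (dg j, false)) := by
    calc ∑ i : Fin j.1, (z (idxOf j i.castSucc, true) + z (idxOf j i.castSucc, false))
        ≤ ∑ _i : Fin j.1, (1 - z (dg j, false)) := Finset.sum_le_sum (fun i _ => hub i)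
      _ = (j.1 : ℝ) * (1 - z (dg j, false)) := by
          rw [Finset.sum_const, Finset.card_univ, Fintype.card_fin, nsmul_eq_mul]
  rcases hz.1 (dg j, true) with hA | hA <;> rcases hz.1 (dg j, false) with hB | hB
  · -- A = 0, B = 0 : impossible
    exfalso
    rw [hA, hB] at hr
    rw [hB] at hsumub
    simp only [mul_zero, mul_one, sub_zero, mul_zero, add_zero] at hr hsumub
    linarith
  · -- A = 0, B = 1
    refine ⟨by rw [hA, hB]; norm_num, ?_⟩
    rw [hA, hB] at hr
    have hz0 : ∑ i : Fin j.1, (z (idxOf j i.castSucc, true) + z (idxOf j i.castSucc, false))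
        = 0 := by linarith [hr]
    intro i
    rw [hA]
    exact (Finset.sum_eq_zero_iff_of_nonneg (fun i _ => hnn i)).mp hz0 i (Finset.mem_univ i)
  · -- A = 1, B = 0
    refine ⟨by rw [hA, hB]; norm_num, ?_⟩
    rw [hA, hB] at hr
    rw [hB] at hub
    have hsum1 : ∑ i : Fin j.1, (z (idxOf j i.castSucc, true) + z (idxOf j i.castSucc, false))
        = ∑ _i : Fin j.1, (1 : ℝ) := by
      rw [Finset.sum_const, Finset.card_univ, Fintype.card_fin, nsmul_eq_mul, mul_one]
      linarith [hr]
    intro i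
    rw [hA]
    have := (Finset.sum_eq_sum_iff_of_le (fun i _ => by simpa using hub i)).mp hsum1 i
      (Finset.mem_univ i)
    simpa using this
  · -- A = 1, B = 1 : impossible
    exfalso
    rw [hA, hB] at hAB
    linarith

lemma eq_case {z : (Idx n × Bool) → ℝ} (hz : good n z) (heq : ℓ0 n z = Mc n * n) :
    ∃ x ∈ BQP n, φA n x = z := by
  have hrow : ∀ j : Fin n, ∑ i : Fin (j.1 + 1), fC n z (idxOf j i) = Mc n := by
    have hsum : ∑ j : Fin n, ∑ i : Fin (j.1 + 1), fC n z (idxOf j i)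
        = ∑ _j : Fin n, Mc n := by
      rw [← ℓ0_eq, heq, Finset.sum_const, Finset.card_univ, Fintype.card_fin, nsmul_eq_mul]
      ring
    intro j
    exact (Finset.sum_eq_sum_iff_of_le (fun j _ => row_le hz j)).mp hsum j (Finset.mem_univ j)
  have key := fun j => row_eq_parts hz j (hrow j)
  have pairEq : ∀ p : Idx n, (fst p).1 < (snd p).1 →
      z (p, true) + z (p, false) = z (dg (snd p), true) := by
    intro p hp
    exact (key (snd p)).2 ⟨(fst p).1, hp⟩
  refine ⟨fun p => z (p, true), ⟨fun p => hz.1 (p, true), ?_⟩, ?_⟩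
  · -- multiplicativity
    intro i j hij
    have hlt : (fst (pr (le_of_lt hij))).1 < (snd (pr (le_of_lt hij))).1 := hij
    have hp := pairEq (pr (le_of_lt hij)) hlt
    have hCD : z ((pr (le_of_lt hij) : Idx n), true) + z (pr (le_of_lt hij), false)
        = z (dg j, true) := hp
    have hDa := hz.2 _ _ (adj_dai hij)
    have hCb := hz.2 _ _ (adj_cbi hij)
    have hABi := (key i).1
    show z (pr (le_of_lt hij), true) = z (dg i, true) * z (dg j, true)
    rcases hz.1 (dg i, true) with h1 | h1 <;> rcases hz.1 (dg j, true) with h2 | h2 <;>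
      rcases hz.1 (pr (le_of_lt hij), true) with h3 | h3 <;>
        rcases hz.1 (pr (le_of_lt hij), false) with h4 | h4 <;>
          rcases hz.1 (dg i, false) with h5 | h5 <;>
            simp only [h1, h2, h3, h4, h5] at hCD hDa hCb hABi ⊢ <;>
              (try norm_num at hCD hDa hCb hABi ⊢) <;> try linarith
  · -- the affine image agrees with z
    funext v
    obtain ⟨p, b⟩ := v
    cases b
    · by_cases hd : fst p = snd p
      · rw [φA_false_diag _ hd]
        have h1 := (key (snd p)).1
        have hp : p = dg (snd p) := dg_of_diag hd
        rw [← hp] at h1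
        show 1 - z (p, true) = z (p, false)
        linarith
      · have hlt : (fst p).1 < (snd p).1 :=
          Nat.lt_of_le_of_ne (fst_le_snd p) (fun hh => hd (Fin.ext hh))
        rw [φA_false_off _ hd]
        have hp := pairEq p hlt
        show z (dg (snd p), true) - z (p, true) = z (p, false)
        linarith [hp]
    · rw [φA_true]

/-! ### Transport to `Fin (n*(n+1))` -/

lemma ssp_iff (y : Fin (n * (n + 1)) → ℝ) :
    y ∈ SSP (Gr n) ↔ good n (fun v => y (vE n v)) := by
  constructor
  · rintro ⟨h1, h2⟩
    refine ⟨fun v => h1 (vE n v), fun u v hadj => ?_⟩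
    refine h2 (vE n u) (vE n v) ?_
    show (G0 n).Adj ((vE n).symm (vE n u)) ((vE n).symm (vE n v))
    rw [Equiv.symm_apply_apply, Equiv.symm_apply_apply]
    exact hadj
  · rintro ⟨h1, h2⟩
    refine ⟨fun a => ?_, fun a b hadj => ?_⟩
    · have := h1 ((vE n).symm a)
      simpa using this
    · have := h2 ((vE n).symm a) ((vE n).symm b) hadj
      simpa using this

lemma phiF_comp (x : Idx n → ℝ) : (fun v => φF n x (vE n v)) = φA n x :=
  funext (fun v => φF_apply x v)

lemma phiF_mem {x : Idx n → ℝ} (hx : x ∈ BQP n) : φF n x ∈ SSP (Gr n) := by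
  rw [ssp_iff, phiF_comp]
  exact phi_good hx

lemma ℓF_phiF (x : Idx n → ℝ) : ℓF n (φF n x) = Mc n * n := by
  rw [ℓF_apply, phiF_comp, ℓ0_phi]

lemma ℓF_le {y : Fin (n * (n + 1)) → ℝ} (hy : y ∈ SSP (Gr n)) : ℓF n y ≤ Mc n * n := by
  rw [ℓF_apply]
  exact ℓ0_le ((ssp_iff y).mp hy)

lemma ℓF_isLinear : IsLinearMap ℝ (ℓF n) := ⟨fun a b => map_add _ a b, fun c a => map_smul _ c a⟩

lemma conv_bound {y : Fin (n * (n + 1)) → ℝ} (hy : y ∈ convexHull ℝ (SSP (Gr n))) :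
    ℓF n y ≤ Mc n * n := by
  have : convexHull ℝ (SSP (Gr n)) ⊆ {w | ℓF n w ≤ Mc n * n} :=
    convexHull_min (fun w hw => ℓF_le hw) (convex_halfSpace_le ℓF_isLinear _)
  exact this hy

lemma image_BQP : φF n '' (BQP n) = SSP (Gr n) ∩ {y | ℓF n y = Mc n * n} := by
  ext y
  constructor
  · rintro ⟨x, hx, rfl⟩
    exact ⟨phiF_mem hx, ℓF_phiF x⟩
  · rintro ⟨hy, hval⟩
    obtain ⟨x, hx, hphi⟩ := eq_case ((ssp_iff y).mp hy) (by rw [← ℓF_apply]; exact hval)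
    refine ⟨x, hx, ?_⟩
    funext a
    have h1 : φF n x a = φA n x ((vE n).symm a) := rfl
    rw [h1, hphi]
    show y (vE n ((vE n).symm a)) = y a
    rw [Equiv.apply_symm_apply]

lemma phiF_inj : Function.Injective (φF n) := by
  intro x x' h
  funext p
  have h1 := congrFun h (vE n (p, true))
  rwa [φF_apply, φF_apply, φA_true, φA_true] at h1

lemma bqp_zero_mem : (fun _ => (0 : ℝ)) ∈ BQP n :=
  ⟨fun _ => Or.inl rfl, fun _ _ _ => by norm_num⟩

/-! ### Slicing a convex hull with a supporting hyperplane -/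

lemma hull_inter {E : Type*} [AddCommGroup E] [Module ℝ E] (s : Set E) (l : E →ₗ[ℝ] ℝ) (m : ℝ)
    (hs : ∀ z ∈ s, l z ≤ m) :
    convexHull ℝ s ∩ {x | l x = m} ⊆ convexHull ℝ (s ∩ {x | l x = m}) := by
  rintro x ⟨hx, hlx⟩
  rw [convexHull_eq] at hx
  obtain ⟨ι, t, w, zf, hw0, hw1, hzs, hcm⟩ := hx
  have hlx' : ∑ i ∈ t, w i * l (zf i) = m := by
    have hm : l x = m := hlx
    rw [← hcm, Finset.centerMass_eq_of_sum_1 _ _ hw1, map_sum] at hm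
    rw [← hm]
    exact Finset.sum_congr rfl (fun i _ => by rw [map_smul, smul_eq_mul])
  have hkey : ∀ i ∈ t, w i ≠ 0 → l (zf i) = m := by
    by_contra hcon
    push_neg at hcon
    obtain ⟨i0, hi0, hwi0, hne⟩ := hcon
    have hlt : l (zf i0) < m := lt_of_le_of_ne (hs _ (hzs i0 hi0)) hne
    have hwpos : 0 < w i0 := lt_of_le_of_ne (hw0 i0 hi0) (Ne.symm hwi0)
    have hstrict : ∑ i ∈ t, w i * l (zf i) < ∑ i ∈ t, w i * m := by
      apply Finset.sum_lt_sum
      · intro i hi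
        exact mul_le_mul_of_nonneg_left (hs _ (hzs i hi)) (hw0 i hi)
      · exact ⟨i0, hi0, by nlinarith⟩
    rw [← Finset.sum_mul, hw1, one_mul] at hstrict
    linarith
  rw [← hcm, ← Finset.centerMass_filter_ne_zero zf]
  apply Finset.centerMass_mem_convexHull
  · intro i hi
    exact hw0 i (Finset.filter_subset _ _ hi)
  · rw [Finset.sum_filter_ne_zero, hw1]
    norm_num
  · intro i hi
    have hi' := Finset.mem_filter.mp hi
    exact ⟨hzs i hi'.1, hkey i hi'.1 hi'.2⟩

end BQPStmt

/-- For every `n ≥ 1` there is a graph `G` on `k = n(n+1)` vertices such that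
`conv(BQP_n)` is affinely equivalent to an exposed face of `conv(SSP(G))`. -/
theorem stmt1 (n : ℕ) (hn : 1 ≤ n) :
    ∃ G : SimpleGraph (Fin (n * (n + 1))),
      ∃ F : Set (Fin (n * (n + 1)) → ℝ),
        IsExposed ℝ (convexHull ℝ (SSP G)) F ∧
        ∃ φ : (Idx n → ℝ) →ᵃ[ℝ] (Fin (n * (n + 1)) → ℝ),
          Function.Injective φ ∧ φ '' (convexHull ℝ (BQP n)) = F := by
  classical
  open BQPStmt in
  refine ⟨Gr n, {x ∈ convexHull ℝ (SSP (Gr n)) |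
      ∀ y ∈ convexHull ℝ (SSP (Gr n)), ℓF n y ≤ ℓF n x}, fun _ => ⟨ℓF n, rfl⟩,
      φF n, phiF_inj, ?_⟩
  have hz0 : φF n (fun _ => (0 : ℝ)) ∈ convexHull ℝ (SSP (Gr n)) :=
    subset_convexHull ℝ _ (phiF_mem bqp_zero_mem)
  have hF : {x ∈ convexHull ℝ (SSP (Gr n)) |
      ∀ y ∈ convexHull ℝ (SSP (Gr n)), ℓF n y ≤ ℓF n x}
      = convexHull ℝ (SSP (Gr n)) ∩ {y | ℓF n y = Mc n * n} := by
    ext w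
    constructor
    · rintro ⟨hw, hmax⟩
      refine ⟨hw, le_antisymm (conv_bound hw) ?_⟩
      have := hmax _ hz0
      rwa [ℓF_phiF] at this
    · rintro ⟨hw, heq⟩
      refine ⟨hw, fun y hy => ?_⟩
      rw [Set.mem_setOf_eq] at heq
      rw [heq]
      exact conv_bound hy
  rw [hF, AffineMap.image_convexHull, image_BQP]
  apply Set.Subset.antisymm
  · apply convexHull_min
    · rintro z ⟨hz1, hz2⟩
      exact ⟨subset_convexHull ℝ _ hz1, hz2⟩
    · exact (convex_convexHull ℝ _).inter (convex_hyperplane ℓF_isLinear _)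
  · have := hull_inter (SSP (Gr n)) (ℓF n : (Fin (n * (n + 1)) → ℝ) →L[ℝ] ℝ).toLinearMap
      (Mc n * n) (fun z hz => ℓF_le hz)
    exact fun w hw => convexHull_mono (by exact fun z hz => hz) (this hw)
end

section
/- For every k ≥ 2 and every n ≥ 1, the k-dimensional cube [0,1]^k (which is the stable set polytope of the edgeless graph on k vertices) is not affinely equivalent to conv(BQP_n) nor to any exposed face of conv(BQP_n): there is no injective affine map φ : ℝ^k → ℝ^{Δ_n} such that φ([0,1]^k) equals conv(BQP_n) or equals an exposed face of conv(BQP_n). -/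
/-- The `k`-dimensional unit cube `[0,1]^k`. -/
def Cube (k : ℕ) : Set (Fin k → ℝ) := {x | ∀ i, 0 ≤ x i ∧ x i ≤ 1}

/-- An element of `BQP n` is determined by its diagonal entries. -/
lemma bqp_eq_of_diag {n : ℕ} {x y : Idx n → ℝ} (hx : x ∈ BQP n) (hy : y ∈ BQP n)
    (h : ∀ i, x ⟨(i, i), le_refl i⟩ = y ⟨(i, i), le_refl i⟩) : x = y := by
  funext p
  obtain ⟨⟨i, j⟩, hij⟩ := p
  rcases lt_or_eq_of_le hij with hlt | heq
  · rw [hx.2 i j hlt, hy.2 i j hlt, h, h]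
  · cases heq
    exact h i

/-- Half of the neighborliness argument: if a distinguishing diagonal coordinate is
aligned, the pairs match up directly. -/
lemma bqp_half {n : ℕ} {u v u' v' : Idx n → ℝ} (hu : u ∈ BQP n) (hv : v ∈ BQP n)
    (hu' : u' ∈ BQP n) (hv' : v' ∈ BQP n) (i0 : Fin n)
    (h1 : u ⟨(i0, i0), le_refl i0⟩ = 1) (h2 : v ⟨(i0, i0), le_refl i0⟩ = 0)
    (h3 : u' ⟨(i0, i0), le_refl i0⟩ = 1) (h4 : v' ⟨(i0, i0), le_refl i0⟩ = 0)
    (hsum : ∀ p, u p + v p = u' p + v' p) : u = u' ∧ v = v' := by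
  have hdu : ∀ j, u ⟨(j, j), le_refl j⟩ = u' ⟨(j, j), le_refl j⟩ := by
    intro j
    rcases lt_trichotomy i0 j with h | h | h
    · have hs := hsum ⟨(i0, j), le_of_lt h⟩
      rw [hu.2 i0 j h, hv.2 i0 j h, hu'.2 i0 j h, hv'.2 i0 j h, h1, h2, h3, h4] at hs
      linarith
    · cases h; rw [h1, h3]
    · have hs := hsum ⟨(j, i0), le_of_lt h⟩
      rw [hu.2 j i0 h, hv.2 j i0 h, hu'.2 j i0 h, hv'.2 j i0 h, h1, h2, h3, h4] at hs
      linarith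
  have hdv : ∀ j, v ⟨(j, j), le_refl j⟩ = v' ⟨(j, j), le_refl j⟩ := by
    intro j
    have hs := hsum ⟨(j, j), le_refl j⟩
    have := hdu j
    linarith
  exact ⟨bqp_eq_of_diag hu hu' hdu, bqp_eq_of_diag hv hv' hdv⟩

/-- `BQP n` is 2-neighborly in the midpoint sense. -/
lemma bqp_neighborly {n : ℕ} {u v u' v' : Idx n → ℝ} (hu : u ∈ BQP n) (hv : v ∈ BQP n)
    (hu' : u' ∈ BQP n) (hv' : v' ∈ BQP n)
    (hsum : ∀ p, u p + v p = u' p + v' p) :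
    (u = u' ∧ v = v') ∨ (u = v' ∧ v = u') := by
  by_cases huv : ∀ i, u ⟨(i, i), le_refl i⟩ = v ⟨(i, i), le_refl i⟩
  · have huv' : u = v := bqp_eq_of_diag hu hv huv
    left
    have hL : u = u' := by
      funext p
      have hs := hsum p
      rw [← huv'] at hs
      rcases hu.1 p with h | h <;> rcases hu'.1 p with h' | h' <;>
        rcases hv'.1 p with h'' | h'' <;> rw [h] at hs ⊢ <;> linarith
    have hR : v = v' := by
      funext p
      have hs := hsum p
      rw [← huv'] at hs ⊢
      rcases hu.1 p with h | h <;> rcases hu'.1 p with h' | h' <;>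
        rcases hv'.1 p with h'' | h'' <;> rw [h] at hs ⊢ <;> linarith
    exact ⟨hL, hR⟩
  · push_neg at huv
    obtain ⟨i0, hi0⟩ := huv
    have hsum0 := hsum ⟨(i0, i0), le_refl i0⟩
    have hsum' : ∀ p, u p + v p = v' p + u' p := fun p => by linarith [hsum p]
    have hsumc : ∀ p, v p + u p = u' p + v' p := fun p => by linarith [hsum p]
    have hsumc' : ∀ p, v p + u p = v' p + u' p := fun p => by linarith [hsum p]
    rcases hu.1 ⟨(i0, i0), le_refl i0⟩ with h1 | h1 <;>
      rcases hv.1 ⟨(i0, i0), le_refl i0⟩ with h2 | h2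
    · exact absurd (h1.trans h2.symm) hi0
    · -- u = 0, v = 1 at i0
      rcases hu'.1 ⟨(i0, i0), le_refl i0⟩ with h3 | h3 <;>
        rcases hv'.1 ⟨(i0, i0), le_refl i0⟩ with h4 | h4
      · rw [h1, h2, h3, h4] at hsum0; linarith
      · obtain ⟨a, b⟩ := bqp_half hv hu hv' hu' i0 h2 h1 h4 h3 hsumc'
        exact Or.inl ⟨b, a⟩
      · obtain ⟨a, b⟩ := bqp_half hv hu hu' hv' i0 h2 h1 h3 h4 hsumc
        exact Or.inr ⟨b, a⟩
      · rw [h1, h2, h3, h4] at hsum0; linarith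
    · -- u = 1, v = 0 at i0
      rcases hu'.1 ⟨(i0, i0), le_refl i0⟩ with h3 | h3 <;>
        rcases hv'.1 ⟨(i0, i0), le_refl i0⟩ with h4 | h4
      · rw [h1, h2, h3, h4] at hsum0; linarith
      · exact Or.inr (bqp_half hu hv hv' hu' i0 h1 h2 h4 h3 hsum')
      · exact Or.inl (bqp_half hu hv hu' hv' i0 h1 h2 h3 h4 hsum)
      · rw [h1, h2, h3, h4] at hsum0; linarith
    · exact absurd (h1.trans h2.symm) hi0

/-- 0/1 vectors are extreme points of the cube. -/
lemma cube_vertex_extreme {k : ℕ} (x : Fin k → ℝ) (hx : ∀ i, x i = 0 ∨ x i = 1) :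
    x ∈ (Cube k).extremePoints ℝ := by
  constructor
  · intro i; rcases hx i with h | h <;> rw [h] <;> norm_num
  · rintro a ha b hb ⟨s, t, hs, ht, hst, hsum⟩
    have hab : ∀ i, a i = x i ∧ b i = x i := by
      intro i
      have hc : s * a i + t * b i = x i := congrFun hsum i
      obtain ⟨ha0, ha1⟩ := ha i
      obtain ⟨hb0, hb1⟩ := hb i
      rcases hx i with h | h <;> rw [h] at hc ⊢
      · constructor <;> nlinarith
      · constructor <;> nlinarith
    exact funext fun i => (hab i).1

/-- Injective affine images preserve extreme points. -/
lemma image_extremePoint {E F : Type*} [AddCommGroup E] [Module ℝ E]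
    [AddCommGroup F] [Module ℝ F] (φ : E →ᵃ[ℝ] F) (hφ : Function.Injective φ)
    {s : Set E} {x : E} (hx : x ∈ s.extremePoints ℝ) :
    φ x ∈ (φ '' s).extremePoints ℝ := by
  refine ⟨⟨x, hx.1, rfl⟩, ?_⟩
  rintro _ ⟨a, ha, rfl⟩ _ ⟨b, hb, rfl⟩ ⟨ta, tb, h1, h2, h3, h4⟩
  rw [← Convex.combo_affine_apply h3] at h4
  have ea := hx.2 ha hb ⟨ta, tb, h1, h2, h3, hφ h4⟩
  exact congrArg φ ea

lemma affine_add {E F : Type*} [AddCommGroup E] [Module ℝ E]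
    [AddCommGroup F] [Module ℝ F] (φ : E →ᵃ[ℝ] F) (a b : E) :
    φ a + φ b = φ (a + b) + φ 0 := by
  have h : ∀ x : E, φ x = φ.linear x + φ 0 := fun x => by
    conv_lhs => rw [AffineMap.decomp φ]
    rfl
  rw [h a, h b, h (a + b), h 0, map_add, map_zero]
  abel

/-- For `k ≥ 2` and `n ≥ 1`, the cube `[0,1]^k` is neither affinely equivalent to
`conv(BQP_n)` nor to any exposed face of `conv(BQP_n)`. -/
theorem stmt2 (k n : ℕ) (hk : 2 ≤ k) (hn : 1 ≤ n) :
    ¬ ∃ φ : (Fin k → ℝ) →ᵃ[ℝ] (Idx n → ℝ),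
        Function.Injective φ ∧
        (φ '' Cube k = convexHull ℝ (BQP n) ∨
          ∃ F : Set (Idx n → ℝ),
            IsExposed ℝ (convexHull ℝ (BQP n)) F ∧ φ '' Cube k = F) := by
  rintro ⟨φ, hφ, hS⟩
  have hext : (φ '' Cube k).extremePoints ℝ ⊆ BQP n := by
    rcases hS with h | ⟨F, hF, h⟩
    · rw [h]; exact extremePoints_convexHull_subset
    · rw [h]
      exact fun x hx =>
        extremePoints_convexHull_subset (hF.isExtreme.extremePoints_subset_extremePoints hx)
  have key : ∀ x : Fin k → ℝ, (∀ i, x i = 0 ∨ x i = 1) → φ x ∈ BQP n := fun x hx =>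
    hext (image_extremePoint φ hφ (cube_vertex_extreme x hx))
  set i0 : Fin k := ⟨0, by omega⟩ with hi0def
  set i1 : Fin k := ⟨1, by omega⟩ with hi1def
  have hi01 : i0 ≠ i1 := by simp [hi0def, hi1def, Fin.ext_iff]
  set e0 : Fin k → ℝ := fun i => if i = i0 then 1 else 0 with he0
  set e1 : Fin k → ℝ := fun i => if i = i1 then 1 else 0 with he1
  have hz : φ (0 : Fin k → ℝ) ∈ BQP n := key 0 (fun i => Or.inl rfl)
  have hc : φ (e0 + e1) ∈ BQP n := by
    refine key _ (fun i => ?_)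
    simp only [he0, he1, Pi.add_apply]
    by_cases h : i = i0 <;> by_cases h' : i = i1 <;>
      simp [h, h', hi01, hi01.symm]
  have ha : φ e0 ∈ BQP n := by
    refine key _ (fun i => ?_)
    simp only [he0]
    by_cases h : i = i0 <;> simp [h]
  have hb : φ e1 ∈ BQP n := by
    refine key _ (fun i => ?_)
    simp only [he1]
    by_cases h : i = i1 <;> simp [h]
  have hsum : ∀ p, φ 0 p + φ (e0 + e1) p = φ e0 p + φ e1 p := by
    intro p
    have h := congrFun (affine_add φ e0 e1) p
    simp only [Pi.add_apply] at h
    linarith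
  rcases bqp_neighborly hz hc ha hb hsum with ⟨h, _⟩ | ⟨h, _⟩
  · have := congrFun (hφ h) i0
    simp [he0, Pi.zero_apply] at this
  · have := congrFun (hφ h) i1
    simp [he1, Pi.zero_apply] at this
end

section
/- For every simple graph G on k vertices with edge set E, there exists a matrix B ∈ {0,1}^{|E|×d} with d = k + |E| + 1, each of whose rows contains exactly four entries equal to 1, such that conv(SSP(G)) is affinely equivalent to an exposed face of the double covering polytope conv(DCP(B)). (Concretely, for each edge {i,j} one adds a slack coordinate u_{ij} and one global coordinate u_0, with rows encoding y_i + y_j + u_{ij} + u_0 = 2, and the face is given by u_0 = 1.) -/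
/-- The double covering vertex set of a 0/1 matrix `B`
(each row of `B` is supposed to contain exactly four 1's). -/
def DCP {m d : ℕ} (B : Fin m → Fin d → ℝ) : Set (Fin d → ℝ) :=
  {x | (∀ j, x j = 0 ∨ x j = 1) ∧ ∀ i, ∑ j, B i j * x j = 2}

/-- Intersecting a convex hull with a supporting hyperplane commutes with taking hulls. -/
lemma face_inter_convexHull {E : Type*} [AddCommGroup E] [Module ℝ E]
    (s : Set E) (l : E →ₗ[ℝ] ℝ) (c : ℝ) (hs : ∀ x ∈ s, l x ≤ c) :
    convexHull ℝ s ∩ {x | l x = c} = convexHull ℝ (s ∩ {x | l x = c}) := by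
  apply Set.Subset.antisymm
  · rintro x ⟨hx, hxc⟩
    rw [convexHull_eq] at hx
    obtain ⟨ι, t, w, z, hw0, hw1, hz, hx⟩ := hx
    have hlx : l x = c := hxc
    have hxsum : x = ∑ i ∈ t, w i • z i := by
      rw [← hx, Finset.centerMass_eq_of_sum_1 _ _ hw1]
    have hsum0 : ∑ i ∈ t, w i * (c - l (z i)) = 0 := by
      have h1 : ∑ i ∈ t, w i * l (z i) = c := by
        rw [hxsum] at hlx
        simpa [map_sum, smul_eq_mul] using hlx
      have h2 : ∑ i ∈ t, w i * c = c := by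
        rw [← Finset.sum_mul, hw1, one_mul]
      simp only [mul_sub]
      rw [Finset.sum_sub_distrib, h1, h2, sub_self]
    have key : ∀ i ∈ t, w i ≠ 0 → l (z i) = c := by
      intro i hi hwi
      have hterm : ∀ i ∈ t, 0 ≤ w i * (c - l (z i)) := fun i hi =>
        mul_nonneg (hw0 i hi) (sub_nonneg.2 (hs _ (hz i hi)))
      have := (Finset.sum_eq_zero_iff_of_nonneg hterm).1 hsum0 i hi
      rcases mul_eq_zero.1 this with h | h
      · exact absurd h hwi
      · linarith [sub_eq_zero.1 h]
    rw [← hx, ← Finset.centerMass_filter_ne_zero]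
    refine Finset.centerMass_mem_convexHull _ (fun i hi => hw0 i (Finset.mem_filter.1 hi).1)
      ?_ (fun i hi => ?_)
    · rw [Finset.sum_filter_ne_zero, hw1]; exact one_pos
    · obtain ⟨hit, hwi⟩ := Finset.mem_filter.1 hi
      exact ⟨hz i hit, key i hit hwi⟩
  · apply Set.subset_inter
    · exact convexHull_mono Set.inter_subset_left
    · exact convexHull_min (Set.inter_subset_right)
        (convex_hyperplane l.isLinear c)

/-- For every graph `G` on `k` vertices with edge set `E` there is a 0/1 matrix `B`
with `|E|` rows and `d = k + |E| + 1` columns, each row containing exactly four 1's,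
such that `conv(SSP(G))` is affinely equivalent to an exposed face of `conv(DCP(B))`. -/
theorem stmt6 (k : ℕ) (G : SimpleGraph (Fin k)) [DecidableRel G.Adj] :
    ∃ B : Fin G.edgeFinset.card → Fin (k + G.edgeFinset.card + 1) → ℝ,
      (∀ i j, B i j = 0 ∨ B i j = 1) ∧
      (∀ i, (Finset.univ.filter (fun j => B i j = 1)).card = 4) ∧
      ∃ F : Set (Fin (k + G.edgeFinset.card + 1) → ℝ),
        IsExposed ℝ (convexHull ℝ (DCP B)) F ∧
        ∃ φ : (Fin k → ℝ) →ᵃ[ℝ] (Fin (k + G.edgeFinset.card + 1) → ℝ),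
          Function.Injective φ ∧ φ '' (convexHull ℝ (SSP G)) = F := by
  classical
  set m := G.edgeFinset.card with hm
  -- pick endpoints of each edge
  have hedges : ∀ e ∈ G.edgeSet, ∃ p : Fin k × Fin k, G.Adj p.1 p.2 ∧ s(p.1, p.2) = e := by
    intro e
    induction e using Sym2.ind with
    | _ i j => intro he; exact ⟨(i, j), he, rfl⟩
  have hpair : ∀ r : Fin m, ∃ p : Fin k × Fin k,
      G.Adj p.1 p.2 ∧ s(p.1, p.2) = (G.edgeFinset.equivFin.symm r : Sym2 (Fin k)) := by
    intro r
    apply hedges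
    have := (G.edgeFinset.equivFin.symm r).2
    rwa [SimpleGraph.mem_edgeFinset] at this
  choose p hadj hmk using hpair
  set a : Fin m → Fin k := fun r => (p r).1 with ha
  set b : Fin m → Fin k := fun r => (p r).2 with hb
  have hab : ∀ r, a r ≠ b r := fun r => (hadj r).ne
  have hcover : ∀ i j, G.Adj i j → ∃ r : Fin m,
      (a r = i ∧ b r = j) ∨ (a r = j ∧ b r = i) := by
    intro i j hij
    refine ⟨G.edgeFinset.equivFin ⟨s(i, j), by rwa [SimpleGraph.mem_edgeFinset]⟩, ?_⟩
    have h := hmk (G.edgeFinset.equivFin ⟨s(i, j), by rwa [SimpleGraph.mem_edgeFinset]⟩)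
    rw [Equiv.symm_apply_apply] at h
    exact Sym2.eq_iff.mp h
  -- coordinates
  set d := k + m + 1 with hd
  have hvlt : ∀ i : Fin k, (i : ℕ) < d := fun i => by omega
  set vtx : Fin k → Fin d := fun i => ⟨i, hvlt i⟩ with hvtx
  have hslt : ∀ r : Fin m, k + (r : ℕ) < d := fun r => by omega
  set slk : Fin m → Fin d := fun r => ⟨k + r, hslt r⟩ with hslk
  set lst : Fin d := ⟨k + m, by omega⟩ with hlst
  have hvtxval : ∀ i : Fin k, ((vtx i : Fin d) : ℕ) = i := fun i => rfl
  have hslkval : ∀ r : Fin m, ((slk r : Fin d) : ℕ) = k + r := fun r => rfl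
  have hlstval : ((lst : Fin d) : ℕ) = k + m := rfl
  -- the row supports
  set S : Fin m → Finset (Fin d) := fun r => {vtx (a r), vtx (b r), slk r, lst} with hS
  set B : Fin m → Fin d → ℝ := fun r j => if j ∈ S r then 1 else 0 with hB
  -- distinctness
  have hvv : ∀ r, vtx (a r) ≠ vtx (b r) := by
    intro r h
    have hv := congrArg Fin.val h
    exact hab r (Fin.ext hv)
  have hvs : ∀ i r, vtx i ≠ slk r := by
    intro i r h
    have hv0 := congrArg Fin.val h
    have hv : ((i : Fin k) : ℕ) = k + (r : ℕ) := hv0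
    have := i.isLt
    omega
  have hvl : ∀ i, vtx i ≠ lst := by
    intro i h
    have hv0 := congrArg Fin.val h
    have hv : ((i : Fin k) : ℕ) = k + m := hv0
    have := i.isLt
    omega
  have hsl : ∀ r, slk r ≠ lst := by
    intro r h
    have hv0 := congrArg Fin.val h
    have hv : k + (r : ℕ) = k + m := hv0
    have := r.isLt
    omega
  have hScard : ∀ r, (S r).card = 4 := by
    intro r
    simp only [hS]
    rw [Finset.card_insert_of_notMem (by simp [hvv r, hvs (a r) r, hvl (a r)]),
      Finset.card_insert_of_notMem (by simp [hvs (b r) r, hvl (b r)]),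
      Finset.card_insert_of_notMem (by simp [hsl r]), Finset.card_singleton]
  -- row sums
  have hrow : ∀ (r : Fin m) (x : Fin d → ℝ),
      ∑ j, B r j * x j = x (vtx (a r)) + x (vtx (b r)) + x (slk r) + x lst := by
    intro r x
    have h1 : ∑ j, B r j * x j = ∑ j ∈ S r, x j := by
      simp only [hB, ite_mul, one_mul, zero_mul]
      rw [Finset.sum_ite_mem, Finset.univ_inter]
    rw [h1]
    simp only [hS]
    rw [Finset.sum_insert (by simp [hvv r, hvs (a r) r, hvl (a r)]),
      Finset.sum_insert (by simp [hvs (b r) r, hvl (b r)]),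
      Finset.sum_insert (by simp [hsl r]), Finset.sum_singleton]
    ring
  -- the affine map
  have hsub : ∀ j : Fin d, ¬ (j : ℕ) < k → (j : ℕ) < k + m → (j : ℕ) - k < m := by
    intro j h1 h2; omega
  set f : (Fin k → ℝ) → (Fin d → ℝ) := fun y j =>
    if h : (j : ℕ) < k then y ⟨j, h⟩
    else if h2 : (j : ℕ) < k + m then
      1 - y (a ⟨(j : ℕ) - k, hsub j h h2⟩) - y (b ⟨(j : ℕ) - k, hsub j h h2⟩)
    else 1 with hf
  set L : (Fin k → ℝ) →ₗ[ℝ] (Fin d → ℝ) :=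
    { toFun := fun y j =>
        if h : (j : ℕ) < k then y ⟨j, h⟩
        else if h2 : (j : ℕ) < k + m then
          - y (a ⟨(j : ℕ) - k, hsub j h h2⟩) - y (b ⟨(j : ℕ) - k, hsub j h h2⟩)
        else 0
      map_add' := by
        intro y z
        funext j
        simp only [Pi.add_apply]
        split_ifs with h1 h2
        · simp [Pi.add_apply]
        · ring
        · simp
      map_smul' := by
        intro c y
        funext j
        simp only [Pi.smul_apply, smul_eq_mul, RingHom.id_apply]
        split_ifs with h1 h2
        · simp [Pi.smul_apply]
        · ring
        · simp } with hL
  set φ : (Fin k → ℝ) →ᵃ[ℝ] (Fin d → ℝ) :=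
    { toFun := f
      linear := L
      map_vadd' := by
        intro q v
        funext j
        simp only [hf, hL, vadd_eq_add, Pi.add_apply, LinearMap.coe_mk, AddHom.coe_mk]
        split_ifs with h1 h2
        · simp [Pi.add_apply]
        · ring
        · simp } with hφ
  have hφapp : ∀ y, φ y = f y := fun y => rfl
  -- values of f at the special coordinates
  have hfvtx : ∀ y i, f y (vtx i) = y i := by
    intro y i
    simp only [hf]
    rw [dif_pos (show ((vtx i : Fin d) : ℕ) < k from i.isLt)]
  have hfslk : ∀ y r, f y (slk r) = 1 - y (a r) - y (b r) := by
    intro y r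
    have h1 : ¬ ((slk r : Fin d) : ℕ) < k := by rw [hslkval]; omega
    have h2 : ((slk r : Fin d) : ℕ) < k + m := by rw [hslkval]; have := r.isLt; omega
    simp only [hf]
    rw [dif_neg h1, dif_pos h2]
    have ea : (⟨((slk r : Fin d) : ℕ) - k, hsub _ h1 h2⟩ : Fin m) = r := by
      apply Fin.ext
      show (k + (r : ℕ)) - k = (r : ℕ)
      omega
    rw [ea]
  have hflst : ∀ y, f y lst = 1 := by
    intro y
    have h1 : ¬ ((lst : Fin d) : ℕ) < k := by rw [hlstval]; omega
    have h2 : ¬ ((lst : Fin d) : ℕ) < k + m := by rw [hlstval]; omega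
    simp only [hf]
    rw [dif_neg h1, dif_neg h2]
  -- injectivity
  have hinj : Function.Injective φ := by
    intro y y' h
    funext i
    have := congrFun h (vtx i)
    rwa [hφapp, hφapp, hfvtx, hfvtx] at this
  -- the image of SSP is exactly DCP ∩ {x lst = 1}
  have himg : φ '' SSP G = DCP B ∩ {x | x lst = 1} := by
    apply Set.Subset.antisymm
    · rintro _ ⟨y, ⟨hy01, hyadj⟩, rfl⟩
      rw [hφapp]
      refine ⟨⟨?_, ?_⟩, hflst y⟩
      · intro j
        simp only [hf]
        split_ifs with h1 h2
        · exact hy01 _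
        · set r : Fin m := ⟨(j : ℕ) - k, hsub j h1 h2⟩ with hr
          have hle := hyadj _ _ (hadj r)
          rcases hy01 (a r) with h | h <;> rcases hy01 (b r) with h' | h'
          · rw [h, h']; norm_num
          · rw [h, h']; norm_num
          · rw [h, h']; norm_num
          · exfalso; rw [h, h'] at hle; norm_num at hle
        · right; rfl
      · intro r
        rw [hrow, hfvtx, hfvtx, hfslk, hflst]
        ring
    · rintro x ⟨⟨hx01, hxrow⟩, hxlst⟩
      have hxl : x lst = 1 := hxlst
      set y : Fin k → ℝ := fun i => x (vtx i) with hy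
      have hySSP : y ∈ SSP G := by
        constructor
        · intro i; exact hx01 _
        · intro i j hij
          obtain ⟨r, hr⟩ := hcover i j hij
          have h1 := hxrow r
          rw [hrow] at h1
          have h2 : (0 : ℝ) ≤ x (slk r) := by
            rcases hx01 (slk r) with h | h <;> rw [h] <;> norm_num
          rw [hxl] at h1
          rcases hr with ⟨hra, hrb⟩ | ⟨hra, hrb⟩ <;> simp only [hy, ← hra, ← hrb] <;> linarith
      refine ⟨y, hySSP, ?_⟩
      rw [hφapp]
      funext j
      simp only [hf]
      split_ifs with h1 h2
      · show x (vtx ⟨(j : ℕ), h1⟩) = x j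
        rw [show vtx ⟨(j : ℕ), h1⟩ = j from Fin.ext rfl]
      · set r : Fin m := ⟨(j : ℕ) - k, hsub j h1 h2⟩ with hr
        have hjr : j = slk r := by
          apply Fin.ext
          show (j : ℕ) = k + ((j : ℕ) - k)
          omega
        have h3 := hxrow r
        rw [hrow, hxl] at h3
        have hxj : x j = x (slk r) := by rw [hjr]
        have e1 : y (a r) = x (vtx (a r)) := rfl
        have e2 : y (b r) = x (vtx (b r)) := rfl
        rw [hxj, e1, e2]
        linarith
      · have hjd : (j : ℕ) < k + m + 1 := j.isLt
        have hjl : j = lst := by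
          apply Fin.ext
          show (j : ℕ) = k + m
          omega
        rw [hjl, hxl]
  -- points of DCP have last coordinate at most 1
  have hle1 : ∀ x ∈ convexHull ℝ (DCP B), x lst ≤ 1 := by
    intro x hx
    have hsub1 : convexHull ℝ (DCP B) ⊆ {x : Fin d → ℝ | x lst ≤ 1} := by
      apply convexHull_min
      · rintro x ⟨hx01, -⟩
        rcases hx01 lst with h | h <;> rw [Set.mem_setOf_eq, h] <;> norm_num
      · exact convex_halfSpace_le (LinearMap.proj lst : (Fin d → ℝ) →ₗ[ℝ] ℝ).isLinear 1
    exact hsub1 hx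
  -- the face
  set F : Set (Fin d → ℝ) := convexHull ℝ (DCP B) ∩ {x | x lst = 1} with hF
  have hFconv : F = convexHull ℝ (DCP B ∩ {x | x lst = 1}) :=
    face_inter_convexHull (DCP B) (LinearMap.proj lst) 1 (fun x hx => by
      rcases hx.1 lst with h | h <;> simp [LinearMap.proj_apply, h])
  have hFimg : φ '' (convexHull ℝ (SSP G)) = F := by
    rw [AffineMap.image_convexHull, himg, hFconv]
  -- a point of F
  have h0 : (0 : Fin k → ℝ) ∈ SSP G := ⟨fun i => Or.inl rfl, fun i j _ => by norm_num⟩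
  have hzF : φ 0 ∈ F := by
    rw [← hFimg]
    exact Set.mem_image_of_mem _ (subset_convexHull ℝ _ h0)
  -- exposedness
  have hexp : IsExposed ℝ (convexHull ℝ (DCP B)) F := by
    intro _
    refine ⟨ContinuousLinearMap.proj lst, ?_⟩
    apply Set.Subset.antisymm
    · rintro x ⟨hx, hx1⟩
      refine ⟨hx, fun z hz => ?_⟩
      rw [ContinuousLinearMap.proj_apply, ContinuousLinearMap.proj_apply]
      have : x lst = 1 := hx1
      rw [this]
      exact hle1 z hz
    · rintro x ⟨hx, hmax⟩
      refine ⟨hx, ?_⟩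
      have h1 : x lst ≤ 1 := hle1 x hx
      have h2 : (φ 0) lst ≤ x lst := hmax _ hzF.1
      have h3 : (φ 0) lst = 1 := hzF.2
      show x lst = 1
      linarith
  refine ⟨B, ?_, ?_, F, hexp, φ, hinj, hFimg⟩
  · intro r j
    simp only [hB]
    split_ifs <;> simp
  · intro r
    have hfilter : (Finset.univ.filter (fun j => B r j = 1)) = S r := by
      ext j
      simp only [hB, Finset.mem_filter, Finset.mem_univ, true_and]
      split_ifs with h <;> simp [h]
    rw [hfilter, hScard]
end

section
/- Let G be a simple graph on Fin k and let y¹, y², y³, y⁴, y⁵, y⁶ ∈ SSP(G) be pairwise distinct with y¹ + y² = y³ + y⁴ = y⁵ + y⁶ (sum of vectors in ℝ^k). Then there exist y⁷, y⁸ ∈ SSP(G), distinct from each other and from each of y¹,…,y⁶, such that y⁷ + y⁸ = y¹ + y². Consequently conv{y¹,…,y⁶} is not a face of conv(SSP(G)). -/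
private lemma neBit {a b : ℝ} (ha : a = 0 ∨ a = 1) (hb : b = 0 ∨ b = 1) (h : a ≠ b) :
    a + b = 1 := by
  rcases ha with h1 | h1 <;> rcases hb with h2 | h2 <;>
    first | (exact absurd (h1.trans h2.symm) h) | linarith

private lemma bnd {a : ℝ} (h : a = 0 ∨ a = 1) : 0 ≤ a ∧ a ≤ 1 := by
  rcases h with h | h <;> constructor <;> linarith

private lemma sumOne {a a' b b' c c' : ℝ} (hb : b = 0 ∨ b = 1) (hb' : b' = 0 ∨ b' = 1)
    (hc : c = 0 ∨ c = 1) (hc' : c' = 0 ∨ c' = 1)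
    (e1 : a + a' = b + b') (e2 : a + a' = c + c') (h : b ≠ c) : a + a' = 1 := by
  have hbc := neBit hb hc h
  rcases hb' with p | p <;> rcases hc' with q | q <;> rcases hb with r | r <;>
    rcases hc with s | s <;> linarith

set_option maxHeartbeats 1600000 in
private lemma mix_mem {k : ℕ} {G : SimpleGraph (Fin k)} {x x' u u' v v' : Fin k → ℝ}
    (hx : x ∈ SSP G) (hx' : x' ∈ SSP G) (hu : u ∈ SSP G) (hu' : u' ∈ SSP G)
    (hv : v ∈ SSP G) (hv' : v' ∈ SSP G)
    (h1 : x + x' = u + u') (h2 : x + x' = v + v') :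
    (fun i => if u i = v i then x i else 1 - x i) ∈ SSP G := by
  obtain ⟨bx, ax⟩ := hx
  obtain ⟨bx', ax'⟩ := hx'
  obtain ⟨bu, au⟩ := hu
  obtain ⟨bu', au'⟩ := hu'
  obtain ⟨bv, av⟩ := hv
  obtain ⟨bv', av'⟩ := hv'
  constructor
  · intro i
    by_cases hc : u i = v i
    · simp only [if_pos hc]; exact bx i
    · simp only [if_neg hc]
      rcases bx i with h | h
      · right; linarith
      · left; linarith
  · intro i j hadj
    simp only
    have e1i := congrFun h1 i; have e1j := congrFun h1 j
    have e2i := congrFun h2 i; have e2j := congrFun h2 j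
    simp only [Pi.add_apply] at e1i e1j e2i e2j
    have axx := ax i j hadj
    have ax'x := ax' i j hadj
    have auu := au i j hadj
    have au'u := au' i j hadj
    have avv := av i j hadj
    have av'v := av' i j hadj
    have Bxi := bnd (bx i); have Bxj := bnd (bx j)
    have Bx'i := bnd (bx' i); have Bx'j := bnd (bx' j)
    have Bui := bnd (bu i); have Buj := bnd (bu j)
    have Bu'i := bnd (bu' i); have Bu'j := bnd (bu' j)
    have Bvi := bnd (bv i); have Bvj := bnd (bv j)
    have Bv'i := bnd (bv' i); have Bv'j := bnd (bv' j)
    by_cases hci : u i = v i <;> by_cases hcj : u j = v j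
    · simp only [if_pos hci, if_pos hcj]; exact axx
    · -- i mixed as x, j flipped
      simp only [if_pos hci, if_neg hcj]
      have huvj : u j + v j = 1 := neBit (bu j) (bv j) hcj
      rcases bx i with p | p <;> rcases bx j with q | q <;> rcases bu j with r | r <;>
        linarith [Bx'i.1, Bx'i.2, Bx'j.1, Bx'j.2, Bui.1, Bui.2, Bu'i.1, Bu'i.2,
          Bu'j.1, Bu'j.2, Bvi.1, Bvi.2, Bvj.1, Bvj.2, Bv'i.1, Bv'i.2, Bv'j.1, Bv'j.2]
    · simp only [if_neg hci, if_pos hcj]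
      have huvi : u i + v i = 1 := neBit (bu i) (bv i) hci
      rcases bx i with p | p <;> rcases bx j with q | q <;> rcases bu i with r | r <;>
        linarith [Bx'i.1, Bx'i.2, Bx'j.1, Bx'j.2, Buj.1, Buj.2, Bu'i.1, Bu'i.2,
          Bu'j.1, Bu'j.2, Bvi.1, Bvi.2, Bvj.1, Bvj.2, Bv'i.1, Bv'i.2, Bv'j.1, Bv'j.2]
    · simp only [if_neg hci, if_neg hcj]
      have hsi : x i + x' i = 1 :=
        sumOne (bu i) (bu' i) (bv i) (bv' i) e1i e2i hci
      have hsj : x j + x' j = 1 :=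
        sumOne (bu j) (bu' j) (bv j) (bv' j) e1j e2j hcj
      linarith

set_option maxHeartbeats 3200000 in
private lemma mix_eq {k : ℕ} {x x' u u' v v' : Fin k → ℝ}
    (bx : ∀ i, x i = 0 ∨ x i = 1) (bx' : ∀ i, x' i = 0 ∨ x' i = 1)
    (bu : ∀ i, u i = 0 ∨ u i = 1) (bu' : ∀ i, u' i = 0 ∨ u' i = 1)
    (bv : ∀ i, v i = 0 ∨ v i = 1) (bv' : ∀ i, v' i = 0 ∨ v' i = 1)
    (h1 : x + x' = u + u') (h2 : x + x' = v + v') :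
    ((fun i => if u i = v i then x i else 1 - x i) = x → u = v) ∧
    ((fun i => if u i = v i then x i else 1 - x i) = x' → u' = v) ∧
    ((fun i => if u i = v i then x i else 1 - x i) = u → x = v) ∧
    ((fun i => if u i = v i then x i else 1 - x i) = u' → x = v') ∧
    ((fun i => if u i = v i then x i else 1 - x i) = v → x = u) ∧
    ((fun i => if u i = v i then x i else 1 - x i) = v' → x = u') := by
  refine ⟨?_, ?_, ?_, ?_, ?_, ?_⟩ <;>
  · intro h
    funext i
    have e1 := congrFun h1 i
    have e2 := congrFun h2 i
    simp only [Pi.add_apply] at e1 e2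
    have hz := congrFun h i
    by_cases hc : u i = v i
    · rw [if_pos hc] at hz
      rcases bx i with p1 | p1 <;> rcases bx' i with p2 | p2 <;> rcases bu i with p3 | p3 <;>
        rcases bu' i with p4 | p4 <;> rcases bv i with p5 | p5 <;> rcases bv' i with p6 | p6 <;>
        linarith
    · have huv := neBit (bu i) (bv i) hc
      rw [if_neg hc] at hz
      rcases bx i with p1 | p1 <;> rcases bx' i with p2 | p2 <;> rcases bu i with p3 | p3 <;>
        rcases bu' i with p4 | p4 <;> rcases bv i with p5 | p5 <;> rcases bv' i with p6 | p6 <;>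
        linarith

/-- If `y¹, …, y⁶ ∈ SSP(G)` are pairwise distinct with
`y¹ + y² = y³ + y⁴ = y⁵ + y⁶`, then there are `y⁷, y⁸ ∈ SSP(G)`, distinct from each
other and from `y¹, …, y⁶`, with `y⁷ + y⁸ = y¹ + y²`; consequently
`conv{y¹, …, y⁶}` is not a face (extreme subset) of `conv(SSP(G))`. -/
theorem stmt8 (k : ℕ) (G : SimpleGraph (Fin k)) (y : Fin 6 → (Fin k → ℝ))
    (hy : ∀ i, y i ∈ SSP G) (hinj : Function.Injective y)
    (hsum : y 0 + y 1 = y 2 + y 3 ∧ y 2 + y 3 = y 4 + y 5) :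
    (∃ y₇ y₈ : Fin k → ℝ, y₇ ∈ SSP G ∧ y₈ ∈ SSP G ∧ y₇ ≠ y₈ ∧
      (∀ i, y₇ ≠ y i ∧ y₈ ≠ y i) ∧ y₇ + y₈ = y 0 + y 1) ∧
    ¬ IsExtreme ℝ (convexHull ℝ (SSP G)) (convexHull ℝ (Set.range y)) := by
  have hs1 : y 0 + y 1 = y 2 + y 3 := hsum.1
  have hs2 : y 0 + y 1 = y 4 + y 5 := hsum.1.trans hsum.2
  have hs1' : y 1 + y 0 = y 2 + y 3 := by rw [add_comm]; exact hs1
  have hs2' : y 1 + y 0 = y 4 + y 5 := by rw [add_comm]; exact hs2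
  have hne : ∀ a b : Fin 6, a ≠ b → y a ≠ y b := fun a b hab h => hab (hinj h)
  set z1 : Fin k → ℝ := fun i => if y 2 i = y 4 i then y 0 i else 1 - y 0 i with hz1
  set z2 : Fin k → ℝ := fun i => if y 2 i = y 4 i then y 1 i else 1 - y 1 i with hz2
  have mem1 : z1 ∈ SSP G :=
    mix_mem (hy 0) (hy 1) (hy 2) (hy 3) (hy 4) (hy 5) hs1 hs2
  have mem2 : z2 ∈ SSP G :=
    mix_mem (hy 1) (hy 0) (hy 2) (hy 3) (hy 4) (hy 5) hs1' hs2'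
  obtain ⟨L0, L1, L2, L3, L4, L5⟩ :=
    mix_eq (fun i => (hy 0).1 i) (fun i => (hy 1).1 i) (fun i => (hy 2).1 i)
      (fun i => (hy 3).1 i) (fun i => (hy 4).1 i) (fun i => (hy 5).1 i) hs1 hs2
  obtain ⟨M0, M1, M2, M3, M4, M5⟩ :=
    mix_eq (fun i => (hy 1).1 i) (fun i => (hy 0).1 i) (fun i => (hy 2).1 i)
      (fun i => (hy 3).1 i) (fun i => (hy 4).1 i) (fun i => (hy 5).1 i) hs1' hs2'
  have h7all : ∀ m : Fin 6, z1 ≠ y m := by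
    intro m
    fin_cases m
    · exact fun h => hne 2 4 (by decide) (L0 h)
    · exact fun h => hne 3 4 (by decide) (L1 h)
    · exact fun h => hne 0 4 (by decide) (L2 h)
    · exact fun h => hne 0 5 (by decide) (L3 h)
    · exact fun h => hne 0 2 (by decide) (L4 h)
    · exact fun h => hne 0 3 (by decide) (L5 h)
  have h8all : ∀ m : Fin 6, z2 ≠ y m := by
    intro m
    fin_cases m
    · exact fun h => hne 3 4 (by decide) (M1 h)
    · exact fun h => hne 2 4 (by decide) (M0 h)
    · exact fun h => hne 1 4 (by decide) (M2 h)
    · exact fun h => hne 1 5 (by decide) (M3 h)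
    · exact fun h => hne 1 2 (by decide) (M4 h)
    · exact fun h => hne 1 3 (by decide) (M5 h)
  obtain ⟨i0, hI⟩ := Function.ne_iff.mp (hne 0 1 (by decide))
  have hz12 : z1 ≠ z2 := by
    intro h
    have hh := congrFun h i0
    simp only [hz1, hz2] at hh
    by_cases hc : y 2 i0 = y 4 i0
    · rw [if_pos hc, if_pos hc] at hh; exact hI hh
    · rw [if_neg hc, if_neg hc] at hh; exact hI (by linarith)
  have hadd : z1 + z2 = y 0 + y 1 := by
    funext i
    simp only [Pi.add_apply, hz1, hz2]
    by_cases hc : y 2 i = y 4 i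
    · rw [if_pos hc, if_pos hc]
    · rw [if_neg hc, if_neg hc]
      have e1 := congrFun hs1 i
      have e2 := congrFun hs2 i
      simp only [Pi.add_apply] at e1 e2
      have := sumOne ((hy 2).1 i) ((hy 3).1 i) ((hy 4).1 i) ((hy 5).1 i) e1 e2 hc
      linarith
  constructor
  · exact ⟨z1, z2, mem1, mem2, hz12, fun m => ⟨h7all m, h8all m⟩, hadd⟩
  · -- not extreme
    intro hExt
    set f : (Fin k → ℝ) → ℝ := fun z => ∑ i, (2 * z1 i - 1) * z i with hf
    have hlin : IsLinearMap ℝ f := by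
      constructor
      · intro a b
        simp only [hf, Pi.add_apply, mul_add, Finset.sum_add_distrib]
      · intro c a
        simp only [hf, Pi.smul_apply, smul_eq_mul, Finset.mul_sum]
        exact Finset.sum_congr rfl fun i _ => by ring
    have hlt : ∀ m : Fin 6, f (y m) < f z1 := by
      intro m
      have key : f z1 - f (y m) = ∑ i, (2 * z1 i - 1) * (z1 i - y m i) := by
        rw [hf]
        rw [← Finset.sum_sub_distrib]
        exact Finset.sum_congr rfl fun i _ => by ring
      obtain ⟨j0, hj0⟩ := Function.ne_iff.mp (h7all m)
      have pos : 0 < ∑ i, (2 * z1 i - 1) * (z1 i - y m i) := by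
        apply Finset.sum_pos'
        · intro i _
          rcases mem1.1 i with p | p <;> rcases (hy m).1 i with q | q <;>
            rw [p, q] <;> norm_num
        · refine ⟨j0, Finset.mem_univ _, ?_⟩
          rcases mem1.1 j0 with p | p <;> rcases (hy m).1 j0 with q | q <;>
            first
            | (exact absurd (p.trans q.symm) hj0)
            | (rw [p, q]; norm_num)
      linarith
    have hsub : Set.range y ⊆ {z | f z < f z1} := by
      rintro _ ⟨m, rfl⟩
      exact hlt m
    have hhull : convexHull ℝ (Set.range y) ⊆ {z | f z < f z1} :=
      convexHull_min hsub (convex_halfSpace_lt hlin _)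
    have m0 : y 0 ∈ convexHull ℝ (Set.range y) := subset_convexHull ℝ _ ⟨0, rfl⟩
    have m1 : y 1 ∈ convexHull ℝ (Set.range y) := subset_convexHull ℝ _ ⟨1, rfl⟩
    have hmid : (1/2 : ℝ) • y 0 + (1/2 : ℝ) • y 1 ∈ convexHull ℝ (Set.range y) :=
      (convex_convexHull ℝ (Set.range y)) m0 m1 (by norm_num) (by norm_num) (by norm_num)
    have hseg : (1/2 : ℝ) • y 0 + (1/2 : ℝ) • y 1 ∈ openSegment ℝ z1 z2 := by
      refine ⟨1/2, 1/2, by norm_num, by norm_num, by norm_num, ?_⟩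
      rw [← smul_add, ← smul_add, hadd]
    have hz1mem : z1 ∈ convexHull ℝ (SSP G) := subset_convexHull ℝ _ mem1
    have hz2mem : z2 ∈ convexHull ℝ (SSP G) := subset_convexHull ℝ _ mem2
    have h1' := hhull (hExt.2 hz1mem hz2mem hmid hseg)
    simp only [Set.mem_setOf_eq] at h1'
    exact lt_irrefl _ h1'
end

section
/- For every simple graph G on k vertices with edge set E and with W the set of isolated vertices of G (vertices belonging to no edge), setting m = 3|E| + 2|W|, the stable set polytope conv(SSP(G)) is affinely equivalent to an exposed face of the three index assignment polytope conv(TAP_m): there is an exposed face F of conv(TAP_m) and an injective affine map φ : ℝ^k → ℝ^{m³} with φ(conv(SSP(G))) = F. -/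
/-- The vertex set of the (axial) three index assignment polytope. -/
def TAP (m : ℕ) : Set (Fin m × Fin m × Fin m → ℝ) :=
  {x | (∀ q, x q = 0 ∨ x q = 1) ∧
       (∀ u, ∑ s, ∑ t, x (s, t, u) = 1) ∧
       (∀ t, ∑ s, ∑ u, x (s, t, u) = 1) ∧
       (∀ s, ∑ t, ∑ u, x (s, t, u) = 1)}

namespace Stmt9
open Finset

variable {k : ℕ} (G : SimpleGraph (Fin k)) [DecidableRel G.Adj]

abbrev P2 := {p : Fin k × Fin k // G.Adj p.1 p.2 ∧ p.1 < p.2}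
abbrev IsoT := {v : Fin k // ∀ w, ¬ G.Adj v w}
abbrev Slot := P2 G × Bool

def ep (σ : Slot G) : Fin k := cond σ.2 σ.1.1.1 σ.1.1.2

abbrev Node := Slot G ⊕ (P2 G ⊕ (IsoT G ⊕ IsoT G))

noncomputable def cyc (i : Fin k) : Equiv.Perm (Slot G) :=
  (Finset.exists_cycleOn (univ.filter (fun σ : Slot G => ep G σ = i))).choose

lemma cyc_isCycleOn (i : Fin k) :
    (cyc G i).IsCycleOn ↑(univ.filter (fun σ : Slot G => ep G σ = i)) :=
  (Finset.exists_cycleOn _).choose_spec.1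

lemma cyc_support (i : Fin k) :
    (cyc G i).support ⊆ univ.filter (fun σ : Slot G => ep G σ = i) :=
  (Finset.exists_cycleOn _).choose_spec.2

noncomputable def pf (σ : Slot G) : Slot G := cyc G (ep G σ) σ

lemma ep_pf (σ : Slot G) : ep G (pf G σ) = ep G σ := by
  by_cases h : cyc G (ep G σ) σ = σ
  · unfold pf; rw [h]
  · have hs : σ ∈ (cyc G (ep G σ)).support := Equiv.Perm.mem_support.2 h
    have h2 : pf G σ ∈ (cyc G (ep G σ)).support := by
      unfold pf; rwa [Equiv.Perm.apply_mem_support]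
    have h3 := cyc_support G (ep G σ) h2
    simpa using h3

lemma pf_inj : Function.Injective (pf G) := by
  intro a b h
  have hab : ep G a = ep G b := by rw [← ep_pf G a, h, ep_pf G b]
  unfold pf at h
  rw [hab] at h
  exact (cyc G (ep G b)).injective h

noncomputable def pE : Equiv.Perm (Slot G) :=
  Equiv.ofBijective (pf G) (Finite.injective_iff_bijective.mp (pf_inj G))

lemma pE_apply (σ : Slot G) : pE G σ = pf G σ := rfl

lemma pf_pE_symm (σ : Slot G) : pf G ((pE G).symm σ) = σ := (pE G).apply_symm_apply σ

lemma ep_pE_symm (σ : Slot G) : ep G ((pE G).symm σ) = ep G σ := by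
  conv_rhs => rw [← pf_pE_symm G σ]
  rw [ep_pf]

lemma const_orbit (P : Slot G → ℝ) (hP : ∀ σ, P (pf G σ) = P σ) {σ τ : Slot G}
    (h : ep G σ = ep G τ) : P σ = P τ := by
  set i := ep G σ with hi
  have key : ∀ n (ζ : Slot G), ep G ζ = i → P ((cyc G i ^ n) ζ) = P ζ ∧ ep G ((cyc G i ^ n) ζ) = i := by
    intro n
    induction n with
    | zero => intro ζ hζ; simp [hζ]
    | succ n ih =>
      intro ζ hζ
      have hc : cyc G i ζ = pf G ζ := by unfold pf; rw [hζ]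
      have hep1 : ep G (cyc G i ζ) = i := by rw [hc, ep_pf, hζ]
      have := ih (cyc G i ζ) hep1
      constructor
      · rw [pow_succ, Equiv.Perm.mul_apply, this.1, hc, hP]
      · rw [pow_succ, Equiv.Perm.mul_apply, this.2]
  have hσ : σ ∈ (↑(univ.filter (fun σ : Slot G => ep G σ = i)) : Set (Slot G)) := by
    simpa using hi.symm
  have hτ : τ ∈ (↑(univ.filter (fun σ : Slot G => ep G σ = i)) : Set (Slot G)) := by
    simpa using (hi.trans h).symm
  have hsc := (cyc_isCycleOn G i).2 hσ hτ
  obtain ⟨n, -, -, hn⟩ := Equiv.Perm.SameCycle.exists_pow_eq _ hsc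
  rw [← hn]
  exact ((key n σ rfl).1).symm

abbrev AF (k : ℕ) := ℝ × (Fin k → ℝ)

def evL (y : Fin k → ℝ) : AF k →ₗ[ℝ] ℝ where
  toFun f := f.1 + ∑ i, f.2 i * y i
  map_add' f g := by
    simp [add_mul, Finset.sum_add_distrib]; ring
  map_smul' c f := by
    show c * f.1 + ∑ i, c * f.2 i * y i = c * (f.1 + ∑ i, f.2 i * y i)
    rw [mul_add, Finset.mul_sum]
    simp [mul_assoc]

def Xf (i : Fin k) : AF k := (0, Pi.single i 1)
def C1 {k : ℕ} : AF k := (1, 0)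

lemma evL_X (y : Fin k → ℝ) (i : Fin k) : evL y (Xf i) = y i := by
  simp [evL, Xf, Pi.single_apply, ite_mul]

lemma evL_C1 (y : Fin k → ℝ) : evL y (C1 : AF k) = 1 := by
  simp [evL, C1]


set_option linter.unusedSectionVars false
set_option linter.unnecessarySimpa false

/-- D1 arc forms (symmetric). -/
def F1c : Node G → Node G → AF k
  | Sum.inr (Sum.inl p), Sum.inl σ => if σ.1 = p then Xf (ep G σ) else 0
  | Sum.inl σ, Sum.inr (Sum.inl p) => if σ.1 = p then Xf (ep G σ) else 0
  | Sum.inr (Sum.inr (Sum.inl v)), Sum.inr (Sum.inr (Sum.inr w)) => if v = w then Xf v.1 else 0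
  | Sum.inr (Sum.inr (Sum.inr w)), Sum.inr (Sum.inr (Sum.inl v)) => if v = w then Xf v.1 else 0
  | _, _ => 0

/-- D2 arc forms (the anticycles). -/
noncomputable def F2c : Node G → Node G → AF k
  | Sum.inl σ, Sum.inl τ => if τ = pf G σ then C1 - Xf (ep G σ) else 0
  | _, _ => 0

noncomputable def Dc (s : Node G) : AF k :=
  C1 - (∑ u, F1c G s u) - ((∑ t, F2c G s t) - F2c G s s)

noncomputable def Fc (s t u : Node G) : AF k :=
  if s = t then (if u = s then Dc G s else F1c G s u) else if u = s then F2c G s t else 0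

lemma F1c_symm (s u : Node G) : F1c G s u = F1c G u s := by
  rcases s with σ | p | v | v <;> rcases u with τ | q | w | w <;> rfl

lemma F1c_self (s : Node G) : F1c G s s = 0 := by
  rcases s with σ | p | v | v <;> rfl

lemma sumF1_A (p : P2 G) : ∑ u, F1c G (Sum.inr (Sum.inl p)) u = Xf p.1.1 + Xf p.1.2 := by
  rw [Fintype.sum_sum_type]
  have h2 : ∀ x : P2 G ⊕ (IsoT G ⊕ IsoT G), F1c G (Sum.inr (Sum.inl p)) (Sum.inr x) = 0 := by
    rintro (q | w | w) <;> rfl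
  simp only [h2, Finset.sum_const_zero, add_zero]
  rw [Fintype.sum_prod_type]
  rw [Finset.sum_eq_single p]
  · show (∑ b : Bool, if p = p then Xf (ep G (p, b)) else 0) = _
    simp [Fintype.sum_bool, ep]
  · intro q _ hq
    show (∑ b : Bool, if q = p then Xf (ep G (q, b)) else 0) = 0
    simp [hq]
  · intro h; exact absurd (Finset.mem_univ p) h

lemma sumF1_N (σ : Slot G) : ∑ u, F1c G (Sum.inl σ) u = Xf (ep G σ) := by
  rw [Fintype.sum_sum_type]
  have h1 : ∀ τ : Slot G, F1c G (Sum.inl σ) (Sum.inl τ) = 0 := fun τ => rfl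
  simp only [h1, Finset.sum_const_zero, zero_add]
  rw [Fintype.sum_sum_type]
  have h2 : ∀ x : IsoT G ⊕ IsoT G, F1c G (Sum.inl σ) (Sum.inr (Sum.inr x)) = 0 := by
    rintro (w | w) <;> rfl
  simp only [h2, Finset.sum_const_zero, add_zero]
  show (∑ q : P2 G, if σ.1 = q then Xf (ep G σ) else 0) = _
  simp

lemma sumF1_I (v : IsoT G) : ∑ u, F1c G (Sum.inr (Sum.inr (Sum.inl v))) u = Xf v.1 := by
  rw [Fintype.sum_sum_type]
  have h1 : ∀ τ : Slot G, F1c G (Sum.inr (Sum.inr (Sum.inl v))) (Sum.inl τ) = 0 := fun τ => rfl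
  simp only [h1, Finset.sum_const_zero, zero_add]
  rw [Fintype.sum_sum_type]
  have h2 : ∀ q : P2 G, F1c G (Sum.inr (Sum.inr (Sum.inl v))) (Sum.inr (Sum.inl q)) = 0 :=
    fun q => rfl
  simp only [h2, Finset.sum_const_zero, zero_add]
  rw [Fintype.sum_sum_type]
  have h3 : ∀ w : IsoT G, F1c G (Sum.inr (Sum.inr (Sum.inl v))) (Sum.inr (Sum.inr (Sum.inl w))) = 0 :=
    fun w => rfl
  simp only [h3, Finset.sum_const_zero, zero_add]
  show (∑ w : IsoT G, if v = w then Xf v.1 else 0) = _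
  simp

lemma sumF1_J (v : IsoT G) : ∑ u, F1c G (Sum.inr (Sum.inr (Sum.inr v))) u = Xf v.1 := by
  rw [Fintype.sum_sum_type]
  have h1 : ∀ τ : Slot G, F1c G (Sum.inr (Sum.inr (Sum.inr v))) (Sum.inl τ) = 0 := fun τ => rfl
  simp only [h1, Finset.sum_const_zero, zero_add]
  rw [Fintype.sum_sum_type]
  have h2 : ∀ q : P2 G, F1c G (Sum.inr (Sum.inr (Sum.inr v))) (Sum.inr (Sum.inl q)) = 0 :=
    fun q => rfl
  simp only [h2, Finset.sum_const_zero, zero_add]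
  rw [Fintype.sum_sum_type]
  have h3 : ∀ w : IsoT G, F1c G (Sum.inr (Sum.inr (Sum.inr v))) (Sum.inr (Sum.inr (Sum.inr w))) = 0 :=
    fun w => rfl
  simp only [h3, Finset.sum_const_zero, add_zero]
  show (∑ w : IsoT G, if w = v then Xf w.1 else 0) = _
  simp

lemma sumF2_N (σ : Slot G) : ∑ t, F2c G (Sum.inl σ) t = C1 - Xf (ep G σ) := by
  rw [Fintype.sum_sum_type]
  have h2 : ∀ x : P2 G ⊕ (IsoT G ⊕ IsoT G), F2c G (Sum.inl σ) (Sum.inr x) = 0 := by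
    rintro (q | w | w) <;> rfl
  simp only [h2, Finset.sum_const_zero, add_zero]
  show (∑ τ : Slot G, if τ = pf G σ then C1 - Xf (ep G σ) else 0) = _
  simp

lemma F2c_src (s t : Node G) (h : ∀ σ : Slot G, s ≠ Sum.inl σ) : F2c G s t = 0 := by
  rcases s with σ | p | v | v
  · exact absurd rfl (h σ)
  all_goals rcases t with τ | q | w | w <;> rfl

lemma sumF2_nonN (s : Node G) (h : ∀ σ : Slot G, s ≠ Sum.inl σ) : ∑ t, F2c G s t = 0 := by
  simp [F2c_src G s _ h]

lemma Dc_A (p : P2 G) : Dc G (Sum.inr (Sum.inl p)) = C1 - Xf p.1.1 - Xf p.1.2 := by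
  rw [Dc, sumF1_A, sumF2_nonN G _ (by intro σ; simp)]
  have : F2c G (Sum.inr (Sum.inl p) : Node G) (Sum.inr (Sum.inl p)) = 0 := rfl
  rw [this]
  abel

lemma Dc_N (σ : Slot G) :
    Dc G (Sum.inl σ) = if σ = pf G σ then C1 - Xf (ep G σ) else 0 := by
  rw [Dc, sumF1_N, sumF2_N]
  have : F2c G (Sum.inl σ : Node G) (Sum.inl σ) = if σ = pf G σ then C1 - Xf (ep G σ) else 0 := rfl
  rw [this]
  abel

lemma Dc_I (v : IsoT G) : Dc G (Sum.inr (Sum.inr (Sum.inl v))) = C1 - Xf v.1 := by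
  rw [Dc, sumF1_I, sumF2_nonN G _ (by intro σ; simp)]
  have : F2c G (Sum.inr (Sum.inr (Sum.inl v)) : Node G) (Sum.inr (Sum.inr (Sum.inl v))) = 0 := rfl
  rw [this]
  abel

lemma Dc_J (v : IsoT G) : Dc G (Sum.inr (Sum.inr (Sum.inr v))) = C1 - Xf v.1 := by
  rw [Dc, sumF1_J, sumF2_nonN G _ (by intro σ; simp)]
  have : F2c G (Sum.inr (Sum.inr (Sum.inr v)) : Node G) (Sum.inr (Sum.inr (Sum.inr v))) = 0 := rfl
  rw [this]
  abel


lemma sum_if_point {α M : Type*} [Fintype α] [DecidableEq α] [AddCommGroup M]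
    (a : α) (c : M) (f : α → M) :
    ∑ u, (if u = a then c else f u) = c - f a + ∑ u, f u := by
  have h : ∀ u, (if u = a then c else f u) = f u + (if u = a then c - f a else 0) := by
    intro u; by_cases h : u = a <;> simp [h] <;> abel
  rw [Finset.sum_congr rfl fun u _ => h u, Finset.sum_add_distrib]
  simp [Finset.sum_ite_eq']
  abel

lemma conserv2 (t : Node G) : ∑ s, F2c G s t = ∑ u, F2c G t u := by
  rcases t with σ | p | v | v
  · rw [sumF2_N]
    rw [Fintype.sum_sum_type]
    have h2 : ∀ x : P2 G ⊕ (IsoT G ⊕ IsoT G), F2c G (Sum.inr x) (Sum.inl σ) = 0 := by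
      rintro (q | w | w) <;> rfl
    simp only [h2, Finset.sum_const_zero, add_zero]
    have h3 : ∀ τ : Slot G, F2c G (Sum.inl τ) (Sum.inl σ)
        = if τ = (pE G).symm σ then C1 - Xf (ep G ((pE G).symm σ)) else 0 := by
      intro τ
      show (if σ = pf G τ then C1 - Xf (ep G τ) else 0) = _
      by_cases h : τ = (pE G).symm σ
      · subst h; rw [if_pos rfl, if_pos (pf_pE_symm G σ).symm]
      · rw [if_neg h, if_neg]
        intro hc
        exact h (by rw [hc]; exact ((pE G).symm_apply_apply τ).symm)
    simp only [h3, Finset.sum_ite_eq']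
    simp [ep_pE_symm]
  all_goals
    rw [sumF2_nonN G _ (by intro σ; simp)]
    rw [Fintype.sum_sum_type]
    have h2 : ∀ x : P2 G ⊕ (IsoT G ⊕ IsoT G), ∀ t, F2c G (Sum.inr x) t = 0 := by
      rintro (q | w | w) t <;> rcases t with τ | q' | w' | w' <;> rfl
    simp only [h2, Finset.sum_const_zero, add_zero]
    have h1 : ∀ τ : Slot G, ∀ x : P2 G ⊕ (IsoT G ⊕ IsoT G), F2c G (Sum.inl τ) (Sum.inr x) = 0 := by
      intro τ x; rcases x with q | w | w <;> rfl
    simp [h1]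

lemma row_id (s : Node G) : ∑ t, ∑ u, Fc G s t u = C1 := by
  have h1 : ∀ t, (∑ u, Fc G s t u)
      = if t = s then (Dc G s - F1c G s s + ∑ u, F1c G s u) else F2c G s t := by
    intro t
    by_cases h : t = s
    · rw [if_pos h, h]
      have hh : ∀ u, Fc G s s u = if u = s then Dc G s else F1c G s u := by
        intro u; rw [Fc, if_pos rfl]
      rw [Finset.sum_congr rfl fun u _ => hh u, sum_if_point]
    · rw [if_neg h]
      have hh : ∀ u, Fc G s t u = if u = s then F2c G s t else 0 := by
        intro u; rw [Fc, if_neg (fun e => h e.symm)]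
      rw [Finset.sum_congr rfl fun u _ => hh u]
      simp [Finset.sum_ite_eq']
  rw [Finset.sum_congr rfl fun t _ => h1 t, sum_if_point, Dc, F1c_self]
  abel

lemma col_id (t : Node G) : ∑ s, ∑ u, Fc G s t u = C1 := by
  have h1 : ∀ s, (∑ u, Fc G s t u)
      = if s = t then (Dc G t - F1c G t t + ∑ u, F1c G t u) else F2c G s t := by
    intro s
    by_cases h : s = t
    · rw [if_pos h, h]
      have hh : ∀ u, Fc G t t u = if u = t then Dc G t else F1c G t u := by
        intro u; rw [Fc, if_pos rfl]
      rw [Finset.sum_congr rfl fun u _ => hh u, sum_if_point]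
    · rw [if_neg h]
      have hh : ∀ u, Fc G s t u = if u = s then F2c G s t else 0 := by
        intro u; rw [Fc, if_neg h]
      rw [Finset.sum_congr rfl fun u _ => hh u]
      simp [Finset.sum_ite_eq']
  rw [Finset.sum_congr rfl fun s _ => h1 s, sum_if_point, Dc, F1c_self, conserv2]
  abel

lemma lay_id (u : Node G) : ∑ s, ∑ t, Fc G s t u = C1 := by
  have h1 : ∀ s, (∑ t, Fc G s t u)
      = if s = u then (Dc G u - F2c G u u + ∑ t, F2c G u t) else F1c G s u := by
    intro s
    by_cases h : s = u
    · rw [if_pos h, h]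
      have hh : ∀ t, Fc G u t u = if t = u then Dc G u else F2c G u t := by
        intro t
        by_cases ht : t = u
        · rw [if_pos ht, ht, Fc, if_pos rfl, if_pos rfl]
        · rw [if_neg ht, Fc, if_neg (fun e => ht e.symm), if_pos rfl]
      rw [Finset.sum_congr rfl fun t _ => hh t, sum_if_point]
    · rw [if_neg h]
      have hh : ∀ t, Fc G s t u = if t = s then F1c G s u else 0 := by
        intro t
        by_cases ht : t = s
        · rw [if_pos ht, ht, Fc, if_pos rfl, if_neg (fun e => h e.symm)]
        · rw [if_neg ht, Fc, if_neg (fun e => ht e.symm), if_neg (fun e => h e.symm)]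
      rw [Finset.sum_congr rfl fun t _ => hh t]
      simp [Finset.sum_ite_eq']
  rw [Finset.sum_congr rfl fun s _ => h1 s, sum_if_point, Dc]
  have hsym : ∑ s, F1c G s u = ∑ s, F1c G u s :=
    Finset.sum_congr rfl fun s _ => F1c_symm G s u
  rw [hsym, F1c_self]
  abel


lemma F1c_mem (s u : Node G) : F1c G s u = 0 ∨ ∃ i, F1c G s u = Xf i := by
  rcases s with σ|p|v|v <;> rcases u with τ|q|w|w <;> simp only [F1c] <;>
    first
      | (left; rfl)
      | (exact Or.inl trivial)
      | (split
         · right; exact ⟨_, rfl⟩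
         · left; rfl)

lemma F2c_mem (s t : Node G) : F2c G s t = 0 ∨ ∃ i, F2c G s t = C1 - Xf i := by
  rcases s with σ|p|v|v <;> rcases t with τ|q|w|w <;> simp only [F2c] <;>
    first
      | (left; rfl)
      | (exact Or.inl trivial)
      | (split
         · right; exact ⟨_, rfl⟩
         · left; rfl)

lemma Fc_mem (s t u : Node G) :
    Fc G s t u = 0 ∨ (∃ i, Fc G s t u = Xf i) ∨ (∃ i, Fc G s t u = C1 - Xf i) ∨
      (∃ p : P2 G, Fc G s t u = C1 - Xf p.1.1 - Xf p.1.2) := by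
  rw [Fc]
  split
  · split
    · rcases s with σ|p|v|v
      · rw [Dc_N]
        split
        · exact Or.inr (Or.inr (Or.inl ⟨_, rfl⟩))
        · exact Or.inl rfl
      · rw [Dc_A]; exact Or.inr (Or.inr (Or.inr ⟨p, rfl⟩))
      · rw [Dc_I]; exact Or.inr (Or.inr (Or.inl ⟨_, rfl⟩))
      · rw [Dc_J]; exact Or.inr (Or.inr (Or.inl ⟨_, rfl⟩))
    · rcases F1c_mem G s u with h | ⟨i, h⟩
      · exact Or.inl h
      · exact Or.inr (Or.inl ⟨i, h⟩)
  · split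
    · rcases F2c_mem G s t with h | ⟨i, h⟩
      · exact Or.inl h
      · exact Or.inr (Or.inr (Or.inl ⟨i, h⟩))
    · exact Or.inl rfl

lemma ev_mem01 {y : Fin k → ℝ} (hy : y ∈ SSP G) (s t u : Node G)
    (hAdj : ∀ p : P2 G, y p.1.1 + y p.1.2 ≤ 1) :
    evL y (Fc G s t u) = 0 ∨ evL y (Fc G s t u) = 1 := by
  rcases Fc_mem G s t u with h | ⟨i, h⟩ | ⟨i, h⟩ | ⟨p, h⟩ <;> rw [h]
  · left; exact map_zero _
  · rw [evL_X]; exact hy.1 i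
  · rw [map_sub, evL_X, evL_C1]
    rcases hy.1 i with h' | h' <;> rw [h'] <;> simp
  · rw [map_sub, map_sub, evL_X, evL_X, evL_C1]
    have h2 := hAdj p
    rcases hy.1 p.1.1 with h' | h' <;> rcases hy.1 p.1.2 with h'' | h'' <;>
      rw [h', h''] at h2 ⊢ <;> revert h2 <;> norm_num

section Transport

variable {m : ℕ} (e : Node G ≃ Fin m)

noncomputable def FcQ (q : Fin m × Fin m × Fin m) : AF k :=
  Fc G (e.symm q.1) (e.symm q.2.1) (e.symm q.2.2)

noncomputable def phiLin : (Fin k → ℝ) →ₗ[ℝ] (Fin m × Fin m × Fin m → ℝ) where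
  toFun y q := ∑ i, (FcQ G e q).2 i * y i
  map_add' a b := by
    funext q; simp [mul_add, Finset.sum_add_distrib]
  map_smul' c a := by
    funext q
    show ∑ i, (FcQ G e q).2 i * (c * a i) = c * ∑ i, (FcQ G e q).2 i * a i
    rw [Finset.mul_sum]
    exact Finset.sum_congr rfl fun i _ => by ring

noncomputable def phi : (Fin k → ℝ) →ᵃ[ℝ] (Fin m × Fin m × Fin m → ℝ) where
  toFun y q := evL y (FcQ G e q)
  linear := phiLin G e
  map_vadd' p v := by
    funext q
    show evL (v + p) (FcQ G e q) = (∑ i, (FcQ G e q).2 i * v i) + evL p (FcQ G e q)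
    show (FcQ G e q).1 + ∑ i, (FcQ G e q).2 i * (v i + p i) = _
    rw [evL]
    simp only [LinearMap.coe_mk, AddHom.coe_mk]
    rw [Finset.sum_congr rfl (fun i _ => mul_add ((FcQ G e q).2 i) (v i) (p i)),
      Finset.sum_add_distrib]
    ring

lemma phi_apply (y : Fin k → ℝ) (q : Fin m × Fin m × Fin m) :
    phi G e y q = evL y (FcQ G e q) := rfl

open scoped Classical in
noncomputable def BadSet : Finset (Fin m × Fin m × Fin m) :=
  Finset.univ.filter (fun q => FcQ G e q = 0)

noncomputable def ellLin : (Fin m × Fin m × Fin m → ℝ) →ₗ[ℝ] ℝ where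
  toFun x := - ∑ q ∈ BadSet G e, x q
  map_add' a b := by simp [Finset.sum_add_distrib]; ring
  map_smul' c a := by simp [Finset.mul_sum]

noncomputable def ell : (Fin m × Fin m × Fin m → ℝ) →L[ℝ] ℝ :=
  LinearMap.toContinuousLinearMap (ellLin G e)

lemma ell_apply (x : Fin m × Fin m × Fin m → ℝ) : ell G e x = - ∑ q ∈ BadSet G e, x q := rfl

lemma ell_nonpos {x : Fin m × Fin m × Fin m → ℝ} (hx : x ∈ TAP m) : ell G e x ≤ 0 := by
  rw [ell_apply, neg_nonpos]
  refine Finset.sum_nonneg fun q _ => ?_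
  rcases hx.1 q with h | h <;> rw [h] <;> norm_num

lemma ell_phi (y : Fin k → ℝ) : ell G e (phi G e y) = 0 := by
  rw [ell_apply, neg_eq_zero]
  refine Finset.sum_eq_zero fun q hq => ?_
  classical
  have h : FcQ G e q = 0 := by simpa [BadSet] using hq
  rw [phi_apply, h, map_zero]

lemma sum2_comp {α β M : Type*} [Fintype α] [Fintype β] [AddCommMonoid M]
    (e : β ≃ α) (f : α → α → M) :
    ∑ a : β, ∑ b : β, f (e a) (e b) = ∑ a : α, ∑ b : α, f a b := by
  have h : ∀ a : β, ∑ b : β, f (e a) (e b) = ∑ b : α, f (e a) b :=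
    fun a => Equiv.sum_comp e (f (e a))
  rw [Finset.sum_congr rfl fun a _ => h a]
  exact Equiv.sum_comp e (fun a => ∑ b, f a b)

lemma phi_mem_TAP {y : Fin k → ℝ} (hy : y ∈ SSP G) : phi G e y ∈ TAP m := by
  have hAdj : ∀ p : P2 G, y p.1.1 + y p.1.2 ≤ 1 := fun p => hy.2 _ _ p.2.1
  have hkey : ∀ F : Node G → Node G → AF k,
      (∑ a : Node G, ∑ b : Node G, F a b) = C1 →
      ∑ a : Node G, ∑ b : Node G, evL y (F a b) = 1 := by
    intro F hF
    have h3 : ∀ a, ∑ b : Node G, evL y (F a b) = evL y (∑ b, F a b) :=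
      fun a => (map_sum (evL y) _ _).symm
    rw [Finset.sum_congr rfl fun a _ => h3 a, ← map_sum (evL y), hF, evL_C1]
  refine ⟨fun q => ?_, fun u => ?_, fun t => ?_, fun s => ?_⟩
  · exact ev_mem01 G hy _ _ _ hAdj
  · exact (sum2_comp e.symm (fun a b => evL y (Fc G a b (e.symm u)))).trans
      (hkey (fun a b => Fc G a b (e.symm u)) (lay_id G (e.symm u)))
  · exact (sum2_comp e.symm (fun a b => evL y (Fc G a (e.symm t) b))).trans
      (hkey (fun a b => Fc G a (e.symm t) b) (col_id G (e.symm t)))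
  · exact (sum2_comp e.symm (fun a b => evL y (Fc G (e.symm s) a b))).trans
      (hkey (fun a b => Fc G (e.symm s) a b) (row_id G (e.symm s)))

end Transport

lemma pairsum {α : Type*} [Fintype α] [DecidableEq α] (g : α → α → ℝ)
    (a1 b1 a2 b2 : α) (hne : (a1, b1) ≠ (a2, b2))
    (h : ∀ a b, (a, b) ≠ (a1, b1) → (a, b) ≠ (a2, b2) → g a b = 0) :
    ∑ a, ∑ b, g a b = g a1 b1 + g a2 b2 := by
  have e1 : ∑ a : α, ∑ b : α, g a b = ∑ x : α × α, g x.1 x.2 :=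
    (Fintype.sum_prod_type (fun x : α × α => g x.1 x.2)).symm
  rw [e1]
  have h2 : ∑ x : α × α, g x.1 x.2
      = ∑ x ∈ ({(a1, b1), (a2, b2)} : Finset (α × α)), g x.1 x.2 := by
    refine (Finset.sum_subset (Finset.subset_univ _) ?_).symm
    intro c _ hc
    simp only [Finset.mem_insert, Finset.mem_singleton] at hc
    push_neg at hc
    exact h c.1 c.2 (by simpa using hc.1) (by simpa using hc.2)
  rw [h2, Finset.sum_pair hne]

lemma triplesum {α : Type*} [Fintype α] [DecidableEq α] (g : α → α → ℝ)
    (a1 b1 a2 b2 a3 b3 : α) (h12 : (a1, b1) ≠ (a2, b2)) (h13 : (a1, b1) ≠ (a3, b3))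
    (h23 : (a2, b2) ≠ (a3, b3))
    (h : ∀ a b, (a, b) ≠ (a1, b1) → (a, b) ≠ (a2, b2) → (a, b) ≠ (a3, b3) → g a b = 0) :
    ∑ a, ∑ b, g a b = g a1 b1 + g a2 b2 + g a3 b3 := by
  have e1 : ∑ a : α, ∑ b : α, g a b = ∑ x : α × α, g x.1 x.2 :=
    (Fintype.sum_prod_type (fun x : α × α => g x.1 x.2)).symm
  rw [e1]
  have hsub : ({(a1, b1), (a2, b2), (a3, b3)} : Finset (α × α)) ⊆ Finset.univ :=
    Finset.subset_univ _
  have h1 : ∑ x : α × α, g x.1 x.2 = ∑ x ∈ ({(a1,b1),(a2,b2),(a3,b3)} : Finset (α × α)), g x.1 x.2 := by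
    refine (Finset.sum_subset hsub ?_).symm
    intro c _ hc
    simp only [Finset.mem_insert, Finset.mem_singleton] at hc
    push_neg at hc
    exact h c.1 c.2 (by simpa using hc.1) (by simpa using hc.2.1) (by simpa using hc.2.2)
  rw [h1]
  rw [Finset.sum_insert (by simp [h12, h13]), Finset.sum_insert (by simp [h23]),
    Finset.sum_singleton]
  ring

section Vanish

lemma Fc_rowA (p : P2 G) (t u : Node G)
    (h1 : ¬(t = Sum.inr (Sum.inl p) ∧ u = Sum.inr (Sum.inl p)))
    (h2 : ¬(t = Sum.inr (Sum.inl p) ∧ u = Sum.inl ((p, true) : Slot G)))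
    (h3 : ¬(t = Sum.inr (Sum.inl p) ∧ u = Sum.inl ((p, false) : Slot G))) :
    Fc G (Sum.inr (Sum.inl p)) t u = 0 := by
  rw [Fc]
  by_cases ht : (Sum.inr (Sum.inl p) : Node G) = t
  · rw [if_pos ht]
    subst ht
    by_cases hu : u = Sum.inr (Sum.inl p)
    · exact absurd ⟨rfl, hu⟩ h1
    · rw [if_neg hu]
      rcases u with ⟨q, b⟩|q|w|w
      · show (if q = p then Xf (ep G (q, b)) else 0) = 0
        rw [if_neg]
        intro hq
        cases b
        · exact h3 ⟨rfl, by rw [hq]⟩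
        · exact h2 ⟨rfl, by rw [hq]⟩
      · rfl
      · rfl
      · rfl
  · rw [if_neg ht]
    split
    · rcases t with σ|q|w|w <;> rfl
    · rfl


lemma Fc_layA (p : P2 G) (s t : Node G)
    (h1 : ¬(s = Sum.inr (Sum.inl p) ∧ t = Sum.inr (Sum.inl p)))
    (h2 : ¬(s = Sum.inl ((p, true) : Slot G) ∧ t = Sum.inl ((p, true) : Slot G)))
    (h3 : ¬(s = Sum.inl ((p, false) : Slot G) ∧ t = Sum.inl ((p, false) : Slot G))) :
    Fc G s t (Sum.inr (Sum.inl p)) = 0 := by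
  rw [Fc]
  by_cases hst : s = t
  · rw [if_pos hst]
    subst hst
    by_cases hu : (Sum.inr (Sum.inl p) : Node G) = s
    · exact absurd ⟨hu.symm, hu.symm⟩ h1
    · rw [if_neg hu]
      rcases s with ⟨q, b⟩|q|w|w
      · show (if (q, b).1 = p then Xf (ep G (q, b)) else 0) = 0
        rw [if_neg]
        intro hq
        simp only at hq
        cases b
        · exact h3 ⟨by rw [hq], by rw [hq]⟩
        · exact h2 ⟨by rw [hq], by rw [hq]⟩
      · rfl
      · rfl
      · rfl
  · rw [if_neg hst]
    split
    · next hu =>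
      rw [← hu]
      rcases t with τ|q|w|w <;> rfl
    · rfl

lemma Fc_rowN (σ : Slot G) (t u : Node G)
    (h1 : ¬(t = Sum.inl σ ∧ u = Sum.inr (Sum.inl σ.1)))
    (h2 : ¬(t = Sum.inl (pf G σ) ∧ u = Sum.inl σ))
    (h3 : ¬(t = Sum.inl σ ∧ u = Sum.inl σ)) :
    Fc G (Sum.inl σ) t u = 0 := by
  rw [Fc]
  by_cases ht : (Sum.inl σ : Node G) = t
  · rw [if_pos ht]
    subst ht
    by_cases hu : u = Sum.inl σ
    · exact absurd ⟨rfl, hu⟩ h3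
    · rw [if_neg hu]
      rcases u with τ|q|w|w
      · rfl
      · show (if σ.1 = q then Xf (ep G σ) else 0) = 0
        rw [if_neg]
        intro hq
        exact h1 ⟨rfl, by rw [hq]⟩
      · rfl
      · rfl
  · rw [if_neg ht]
    split
    · next hu =>
      rcases t with τ|q|w|w
      · show (if τ = pf G σ then C1 - Xf (ep G σ) else 0) = 0
        rw [if_neg]
        intro hτ
        exact h2 ⟨by rw [hτ], hu⟩
      · rfl
      · rfl
      · rfl
    · rfl

lemma Fc_layN (σ : Slot G) (s t : Node G)
    (h1 : ¬(s = Sum.inr (Sum.inl σ.1) ∧ t = Sum.inr (Sum.inl σ.1)))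
    (h2 : ¬(s = Sum.inl σ ∧ t = Sum.inl (pf G σ)))
    (h3 : ¬(s = Sum.inl σ ∧ t = Sum.inl σ)) :
    Fc G s t (Sum.inl σ) = 0 := by
  rw [Fc]
  by_cases hst : s = t
  · rw [if_pos hst]
    subst hst
    by_cases hu : (Sum.inl σ : Node G) = s
    · exact absurd ⟨hu.symm, hu.symm⟩ h3
    · rw [if_neg hu]
      rcases s with τ|q|w|w
      · rfl
      · show (if σ.1 = q then Xf (ep G σ) else 0) = 0
        rw [if_neg]
        intro hq
        exact h1 ⟨by rw [hq], by rw [hq]⟩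
      · rfl
      · rfl
  · rw [if_neg hst]
    split
    · next hu =>
      rw [← hu]
      rcases t with τ|q|w|w
      · show (if τ = pf G σ then C1 - Xf (ep G σ) else 0) = 0
        rw [if_neg]
        intro hτ
        exact h2 ⟨hu.symm, by rw [hτ]⟩
      · rfl
      · rfl
      · rfl
    · rfl

lemma Fc_colN (σ : Slot G) (s u : Node G)
    (h1 : ¬(s = Sum.inl σ ∧ u = Sum.inr (Sum.inl σ.1)))
    (h2 : ¬(s = Sum.inl ((pE G).symm σ) ∧ u = Sum.inl ((pE G).symm σ)))
    (h3 : ¬(s = Sum.inl σ ∧ u = Sum.inl σ)) :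
    Fc G s (Sum.inl σ) u = 0 := by
  rw [Fc]
  by_cases hst : s = (Sum.inl σ : Node G)
  · rw [if_pos hst]
    subst hst
    by_cases hu : u = Sum.inl σ
    · exact absurd ⟨rfl, hu⟩ h3
    · rw [if_neg hu]
      rcases u with τ|q|w|w
      · rfl
      · show (if σ.1 = q then Xf (ep G σ) else 0) = 0
        rw [if_neg]
        intro hq
        exact h1 ⟨rfl, by rw [hq]⟩
      · rfl
      · rfl
  · rw [if_neg hst]
    split
    · next hu =>
      rcases s with τ|q|w|w
      · show (if σ = pf G τ then C1 - Xf (ep G τ) else 0) = 0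
        rw [if_neg]
        intro hτ
        have hτ2 : τ = (pE G).symm σ := by
          apply (pE G).injective
          rw [(pE G).apply_symm_apply, pE_apply, ← hτ]
        exact h2 ⟨by rw [hτ2], hu.trans (by rw [hτ2])⟩
      · rfl
      · rfl
      · rfl
    · rfl

lemma Fc_rowI (v : IsoT G) (t u : Node G)
    (h1 : ¬(t = Sum.inr (Sum.inr (Sum.inl v)) ∧ u = Sum.inr (Sum.inr (Sum.inl v))))
    (h2 : ¬(t = Sum.inr (Sum.inr (Sum.inl v)) ∧ u = Sum.inr (Sum.inr (Sum.inr v)))) :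
    Fc G (Sum.inr (Sum.inr (Sum.inl v))) t u = 0 := by
  rw [Fc]
  by_cases ht : (Sum.inr (Sum.inr (Sum.inl v)) : Node G) = t
  · rw [if_pos ht]
    subst ht
    by_cases hu : u = Sum.inr (Sum.inr (Sum.inl v))
    · exact absurd ⟨rfl, hu⟩ h1
    · rw [if_neg hu]
      rcases u with τ|q|w|w
      · rfl
      · rfl
      · rfl
      · show (if v = w then Xf v.1 else 0) = 0
        rw [if_neg]
        intro hw
        exact h2 ⟨rfl, by rw [hw]⟩
  · rw [if_neg ht]
    split
    · rcases t with τ|q|w|w <;> rfl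
    · rfl

lemma Fc_layI (v : IsoT G) (s t : Node G)
    (h1 : ¬(s = Sum.inr (Sum.inr (Sum.inl v)) ∧ t = Sum.inr (Sum.inr (Sum.inl v))))
    (h2 : ¬(s = Sum.inr (Sum.inr (Sum.inr v)) ∧ t = Sum.inr (Sum.inr (Sum.inr v)))) :
    Fc G s t (Sum.inr (Sum.inr (Sum.inl v))) = 0 := by
  rw [Fc]
  by_cases hst : s = t
  · rw [if_pos hst]
    subst hst
    by_cases hu : (Sum.inr (Sum.inr (Sum.inl v)) : Node G) = s
    · exact absurd ⟨hu.symm, hu.symm⟩ h1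
    · rw [if_neg hu]
      rcases s with τ|q|w|w
      · rfl
      · rfl
      · rfl
      · show (if v = w then Xf v.1 else 0) = 0
        rw [if_neg]
        intro hw
        exact h2 ⟨by rw [hw], by rw [hw]⟩
  · rw [if_neg hst]
    split
    · next hu =>
      rw [← hu]
      rcases t with τ'|q'|w'|w' <;> rfl
    · rfl

lemma Fc_rowJ (v : IsoT G) (t u : Node G)
    (h1 : ¬(t = Sum.inr (Sum.inr (Sum.inr v)) ∧ u = Sum.inr (Sum.inr (Sum.inr v))))
    (h2 : ¬(t = Sum.inr (Sum.inr (Sum.inr v)) ∧ u = Sum.inr (Sum.inr (Sum.inl v)))) :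
    Fc G (Sum.inr (Sum.inr (Sum.inr v))) t u = 0 := by
  rw [Fc]
  by_cases ht : (Sum.inr (Sum.inr (Sum.inr v)) : Node G) = t
  · rw [if_pos ht]
    subst ht
    by_cases hu : u = Sum.inr (Sum.inr (Sum.inr v))
    · exact absurd ⟨rfl, hu⟩ h1
    · rw [if_neg hu]
      rcases u with τ|q|w|w
      · rfl
      · rfl
      · show (if w = v then Xf w.1 else 0) = 0
        rw [if_neg]
        intro hw
        exact h2 ⟨rfl, by rw [hw]⟩
      · rfl
  · rw [if_neg ht]
    split
    · rcases t with τ|q|w|w <;> rfl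
    · rfl

end Vanish

lemma converse {m : ℕ} (e : Node G ≃ Fin m) (x : Fin m × Fin m × Fin m → ℝ)
    (hx : x ∈ TAP m) (hz : ell G e x = 0) : ∃ y ∈ SSP G, phi G e y = x := by
  classical
  set x3 : Node G → Node G → Node G → ℝ := fun s t u => x (e s, e t, e u) with hx3def
  have h01 : ∀ s t u, x3 s t u = 0 ∨ x3 s t u = 1 := fun s t u => hx.1 _
  have hnn01 : ∀ s t u, 0 ≤ x3 s t u := by
    intro s t u; rcases h01 s t u with h | h <;> rw [h] <;> norm_num
  have hzero : ∀ s t u : Node G, Fc G s t u = 0 → x3 s t u = 0 := by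
    intro s t u hf
    have hsum : ∑ q ∈ BadSet G e, x q = 0 := by
      have h := hz; rw [ell_apply, neg_eq_zero] at h; exact h
    have hnn : ∀ q ∈ BadSet G e, 0 ≤ x q := by
      intro q _; rcases hx.1 q with h | h <;> rw [h] <;> norm_num
    have hall := (Finset.sum_eq_zero_iff_of_nonneg hnn).mp hsum
    refine hall (e s, e t, e u) ?_
    simp only [BadSet, Finset.mem_filter, Finset.mem_univ, true_and, FcQ]
    exact Finset.mem_filter.2 ⟨Finset.mem_univ _, by simpa [Equiv.symm_apply_apply] using hf⟩
  have hrow : ∀ s : Node G, ∑ t : Node G, ∑ u : Node G, x3 s t u = 1 :=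
    fun s => (sum2_comp e (fun a b => x (e s, a, b))).trans (hx.2.2.2 (e s))
  have hcol : ∀ t : Node G, ∑ s : Node G, ∑ u : Node G, x3 s t u = 1 :=
    fun t => (sum2_comp e (fun a b => x (a, e t, b))).trans (hx.2.2.1 (e t))
  have hlay : ∀ u : Node G, ∑ s : Node G, ∑ t : Node G, x3 s t u = 1 :=
    fun u => (sum2_comp e (fun a b => x (a, b, e u))).trans (hx.2.1 (e u))
  have mk : ∀ {a b c d : Node G}, (a, b) ≠ (c, d) → ¬(a = c ∧ b = d) :=
    fun hne hand => hne (by rw [hand.1, hand.2])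
  -- row at edge node
  have E1 : ∀ p : P2 G,
      x3 (Sum.inr (Sum.inl p) : Node G) (Sum.inr (Sum.inl p) : Node G) (Sum.inr (Sum.inl p) : Node G)
      + x3 (Sum.inr (Sum.inl p) : Node G) (Sum.inr (Sum.inl p) : Node G) (Sum.inl ((p, true) : Slot G) : Node G)
      + x3 (Sum.inr (Sum.inl p) : Node G) (Sum.inr (Sum.inl p) : Node G) (Sum.inl ((p, false) : Slot G) : Node G) = 1 := by
    intro p
    rw [← hrow (Sum.inr (Sum.inl p) : Node G)]
    exact (triplesum (fun t u => x3 (Sum.inr (Sum.inl p) : Node G) t u) _ _ _ _ _ _ (by simp) (by simp) (by simp)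
      (fun a b hA hB hC => hzero _ _ _ (Fc_rowA G p a b (mk hA) (mk hB) (mk hC)))).symm
  -- layer at edge node
  have E2 : ∀ p : P2 G,
      x3 (Sum.inr (Sum.inl p) : Node G) (Sum.inr (Sum.inl p) : Node G) (Sum.inr (Sum.inl p) : Node G)
      + x3 (Sum.inl ((p, true) : Slot G) : Node G) (Sum.inl ((p, true) : Slot G) : Node G) (Sum.inr (Sum.inl p) : Node G)
      + x3 (Sum.inl ((p, false) : Slot G) : Node G) (Sum.inl ((p, false) : Slot G) : Node G) (Sum.inr (Sum.inl p) : Node G) = 1 := by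
    intro p
    rw [← hlay (Sum.inr (Sum.inl p) : Node G)]
    exact (triplesum (fun a b => x3 a b (Sum.inr (Sum.inl p) : Node G)) _ _ _ _ _ _ (by simp) (by simp) (by simp)
      (fun a b hA hB hC => hzero _ _ _ (Fc_layA G p a b (mk hA) (mk hB) (mk hC)))).symm
  -- row at slot node
  have E3 : ∀ σ : Slot G,
      x3 (Sum.inl σ : Node G) (Sum.inl σ : Node G) (Sum.inr (Sum.inl σ.1))
      + x3 (Sum.inl σ : Node G) (Sum.inl (pf G σ)) (Sum.inl σ : Node G) = 1 := by
    intro σ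
    rw [← hrow (Sum.inl σ : Node G)]
    by_cases hps : pf G σ = σ
    · rw [hps]
      exact (pairsum (fun t u => x3 (Sum.inl σ : Node G) t u) _ _ _ _ (by simp)
        (fun a b hA hB => hzero _ _ _ (Fc_rowN G σ a b (mk hA)
          (by rw [hps]; exact mk hB) (mk hB)))).symm
    · have hd : x3 (Sum.inl σ : Node G) (Sum.inl σ : Node G) (Sum.inl σ : Node G) = 0 := by
        apply hzero
        rw [Fc, if_pos rfl, if_pos rfl, Dc_N, if_neg (fun h => hps h.symm)]
      have ht := triplesum (fun t u => x3 (Sum.inl σ : Node G) t u)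
        (Sum.inl σ : Node G) (Sum.inr (Sum.inl σ.1)) (Sum.inl (pf G σ)) (Sum.inl σ : Node G) (Sum.inl σ : Node G) (Sum.inl σ : Node G)
        (by simp) (by simp) (by simp [hps])
        (fun a b hA hB hC => hzero _ _ _ (Fc_rowN G σ a b (mk hA) (mk hB) (mk hC)))
      rw [ht]
      simp only [hd, add_zero]
  -- layer at slot node
  have E4 : ∀ σ : Slot G,
      x3 (Sum.inr (Sum.inl (σ).1)) (Sum.inr (Sum.inl (σ).1)) (Sum.inl (σ))
      + x3 (Sum.inl σ : Node G) (Sum.inl (pf G σ)) (Sum.inl σ : Node G) = 1 := by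
    intro σ
    rw [← hlay (Sum.inl σ : Node G)]
    by_cases hps : pf G σ = σ
    · rw [hps]
      exact (pairsum (fun a b => x3 a b (Sum.inl σ : Node G)) _ _ _ _ (by simp)
        (fun a b hA hB => hzero _ _ _ (Fc_layN G σ a b (mk hA)
          (by rw [hps]; exact mk hB) (mk hB)))).symm
    · have hd : x3 (Sum.inl σ : Node G) (Sum.inl σ : Node G) (Sum.inl σ : Node G) = 0 := by
        apply hzero
        rw [Fc, if_pos rfl, if_pos rfl, Dc_N, if_neg (fun h => hps h.symm)]
      have ht := triplesum (fun a b => x3 a b (Sum.inl σ : Node G))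
        (Sum.inr (Sum.inl σ.1)) (Sum.inr (Sum.inl σ.1)) (Sum.inl σ : Node G) (Sum.inl (pf G σ))
        (Sum.inl σ : Node G) (Sum.inl σ : Node G)
        (by simp) (by simp) (by simp [hps])
        (fun a b hA hB hC => hzero _ _ _ (Fc_layN G σ a b (mk hA) (mk hB) (mk hC)))
      rw [ht]
      simp only [hd, add_zero]
  -- column at slot node
  have E5 : ∀ σ : Slot G,
      x3 (Sum.inl σ : Node G) (Sum.inl σ : Node G) (Sum.inr (Sum.inl σ.1))
      + x3 (Sum.inl ((pE G).symm σ)) (Sum.inl σ : Node G) (Sum.inl ((pE G).symm σ)) = 1 := by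
    intro σ
    rw [← hcol (Sum.inl σ : Node G)]
    by_cases hps : (pE G).symm σ = σ
    · rw [hps]
      exact (pairsum (fun a b => x3 a (Sum.inl σ : Node G) b) _ _ _ _ (by simp)
        (fun a b hA hB => hzero _ _ _ (Fc_colN G σ a b (mk hA)
          (by rw [hps]; exact mk hB) (mk hB)))).symm
    · have hd : x3 (Sum.inl σ : Node G) (Sum.inl σ : Node G) (Sum.inl σ : Node G) = 0 := by
        apply hzero
        have hps2 : ¬ σ = pf G σ := by
          intro h
          exact hps (by apply (pE G).injective; rw [(pE G).apply_symm_apply, pE_apply, ← h])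
        rw [Fc, if_pos rfl, if_pos rfl, Dc_N, if_neg hps2]
      have ht := triplesum (fun a b => x3 a (Sum.inl σ : Node G) b)
        (Sum.inl σ : Node G) (Sum.inr (Sum.inl σ.1))
        (Sum.inl ((pE G).symm σ)) (Sum.inl ((pE G).symm σ)) (Sum.inl σ : Node G) (Sum.inl σ : Node G)
        (by simp) (by simp) (by simp [hps])
        (fun a b hA hB hC => hzero _ _ _ (Fc_colN G σ a b (mk hA) (mk hB) (mk hC)))
      rw [ht]
      simp only [hd, add_zero]
  -- iso rows/layers
  have E6 : ∀ v : IsoT G,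
      x3 (Sum.inr (Sum.inr (Sum.inl v)) : Node G) (Sum.inr (Sum.inr (Sum.inl v)) : Node G) (Sum.inr (Sum.inr (Sum.inl v)) : Node G) + x3 (Sum.inr (Sum.inr (Sum.inl v)) : Node G) (Sum.inr (Sum.inr (Sum.inl v)) : Node G) (Sum.inr (Sum.inr (Sum.inr v)) : Node G) = 1 := by
    intro v
    rw [← hrow (Sum.inr (Sum.inr (Sum.inl v)) : Node G)]
    exact (pairsum (fun t u => x3 (Sum.inr (Sum.inr (Sum.inl v)) : Node G) t u) _ _ _ _ (by simp)
      (fun a b hA hB => hzero _ _ _ (Fc_rowI G v a b (mk hA) (mk hB)))).symm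
  have E7 : ∀ v : IsoT G,
      x3 (Sum.inr (Sum.inr (Sum.inl v)) : Node G) (Sum.inr (Sum.inr (Sum.inl v)) : Node G) (Sum.inr (Sum.inr (Sum.inl v)) : Node G) + x3 (Sum.inr (Sum.inr (Sum.inr v)) : Node G) (Sum.inr (Sum.inr (Sum.inr v)) : Node G) (Sum.inr (Sum.inr (Sum.inl v)) : Node G) = 1 := by
    intro v
    rw [← hlay (Sum.inr (Sum.inr (Sum.inl v)) : Node G)]
    exact (pairsum (fun a b => x3 a b (Sum.inr (Sum.inr (Sum.inl v)) : Node G)) _ _ _ _ (by simp)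
      (fun a b hA hB => hzero _ _ _ (Fc_layI G v a b (mk hA) (mk hB)))).symm
  have E8 : ∀ v : IsoT G,
      x3 (Sum.inr (Sum.inr (Sum.inr v)) : Node G) (Sum.inr (Sum.inr (Sum.inr v)) : Node G) (Sum.inr (Sum.inr (Sum.inr v)) : Node G) + x3 (Sum.inr (Sum.inr (Sum.inr v)) : Node G) (Sum.inr (Sum.inr (Sum.inr v)) : Node G) (Sum.inr (Sum.inr (Sum.inl v)) : Node G) = 1 := by
    intro v
    rw [← hrow (Sum.inr (Sum.inr (Sum.inr v)) : Node G)]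
    exact (pairsum (fun t u => x3 (Sum.inr (Sum.inr (Sum.inr v)) : Node G) t u) _ _ _ _ (by simp)
      (fun a b hA hB => hzero _ _ _ (Fc_rowJ G v a b (mk hA) (mk hB)))).symm
  -- derived equations
  have hQ : ∀ σ : Slot G, x3 (Sum.inl σ : Node G) (Sum.inl σ : Node G) (Sum.inr (Sum.inl σ.1)) = x3 (Sum.inr (Sum.inl (σ).1)) (Sum.inr (Sum.inl (σ).1)) (Sum.inl (σ)) := by
    intro σ; linarith [E3 σ, E4 σ]
  have hRP : ∀ σ : Slot G, x3 (Sum.inl σ : Node G) (Sum.inl (pf G σ)) (Sum.inl σ : Node G) = 1 - x3 (Sum.inr (Sum.inl (σ).1)) (Sum.inr (Sum.inl (σ).1)) (Sum.inl (σ)) := by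
    intro σ; linarith [E4 σ]
  have hPinv : ∀ σ : Slot G, x3 (Sum.inr (Sum.inl ((pE G).symm σ).1)) (Sum.inr (Sum.inl ((pE G).symm σ).1)) (Sum.inl ((pE G).symm σ)) = x3 (Sum.inr (Sum.inl (σ).1)) (Sum.inr (Sum.inl (σ).1)) (Sum.inl (σ)) := by
    intro σ
    have h := hRP ((pE G).symm σ)
    rw [pf_pE_symm] at h
    linarith [E5 σ, hQ σ]
  have hPpf : ∀ σ : Slot G, x3 (Sum.inr (Sum.inl (pf G σ).1)) (Sum.inr (Sum.inl (pf G σ).1)) (Sum.inl (pf G σ)) = x3 (Sum.inr (Sum.inl (σ).1)) (Sum.inr (Sum.inl (σ).1)) (Sum.inl (σ)) := by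
    intro σ
    have h := hPinv (pE G σ)
    rw [(pE G).symm_apply_apply] at h
    have h2 : (pE G) σ = pf G σ := rfl
    rw [h2] at h
    exact h.symm
  have hJI : ∀ v : IsoT G, x3 (Sum.inr (Sum.inr (Sum.inr v)) : Node G) (Sum.inr (Sum.inr (Sum.inr v)) : Node G) (Sum.inr (Sum.inr (Sum.inl v)) : Node G) = x3 (Sum.inr (Sum.inr (Sum.inl v)) : Node G) (Sum.inr (Sum.inr (Sum.inl v)) : Node G) (Sum.inr (Sum.inr (Sum.inr v)) : Node G) := by
    intro v; linarith [E6 v, E7 v]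
  -- the stable set
  set y : Fin k → ℝ := fun i =>
    if h : ∃ σ : Slot G, ep G σ = i then x3 (Sum.inr (Sum.inl (h.choose).1)) (Sum.inr (Sum.inl (h.choose).1)) (Sum.inl (h.choose))
    else if hv : ∀ w, ¬ G.Adj i w then
      x3 (Sum.inr (Sum.inr (Sum.inl ⟨i, hv⟩))) (Sum.inr (Sum.inr (Sum.inl ⟨i, hv⟩)))
        (Sum.inr (Sum.inr (Sum.inr ⟨i, hv⟩)))
    else 0 with hydef
  have hyslot : ∀ σ : Slot G, y (ep G σ) = x3 (Sum.inr (Sum.inl (σ).1)) (Sum.inr (Sum.inl (σ).1)) (Sum.inl (σ)) := by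
    intro σ
    have hex : ∃ τ : Slot G, ep G τ = ep G σ := ⟨σ, rfl⟩
    simp only [hydef, dif_pos hex]
    exact const_orbit G
      (fun τ => x3 (Sum.inr (Sum.inl τ.1)) (Sum.inr (Sum.inl τ.1)) (Sum.inl τ))
      hPpf hex.choose_spec
  have hyiso : ∀ v : IsoT G, y v.1 = x3 (Sum.inr (Sum.inr (Sum.inl v)) : Node G) (Sum.inr (Sum.inr (Sum.inl v)) : Node G) (Sum.inr (Sum.inr (Sum.inr v)) : Node G) := by
    intro v
    have hnex : ¬ ∃ σ : Slot G, ep G σ = v.1 := by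
      rintro ⟨⟨p, b⟩, hσ⟩
      cases b
      · exact v.2 p.1.1 (by
          have : ep G (p, false) = p.1.2 := rfl
          rw [this] at hσ
          rw [← hσ]; exact p.2.1.symm)
      · exact v.2 p.1.2 (by
          have : ep G (p, true) = p.1.1 := rfl
          rw [this] at hσ
          rw [← hσ]; exact p.2.1)
    simp only [hydef, dif_neg hnex, dif_pos v.2]
  have hySSP : y ∈ SSP G := by
    constructor
    · intro i
      simp only [hydef]
      split
      · exact h01 _ _ _
      · split
        · exact h01 _ _ _
        · exact Or.inl rfl
    · intro i j hadj
      rcases lt_trichotomy i j with hij | hij | hij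
      · have h1 : y i = x3 (Sum.inr (Sum.inl (((⟨(i, j), hadj, hij⟩ : P2 G), true)).1)) (Sum.inr (Sum.inl (((⟨(i, j), hadj, hij⟩ : P2 G), true)).1)) (Sum.inl (((⟨(i, j), hadj, hij⟩ : P2 G), true))) :=
          hyslot ((⟨(i, j), hadj, hij⟩ : P2 G), true)
        have h2 : y j = x3 (Sum.inr (Sum.inl (((⟨(i, j), hadj, hij⟩ : P2 G), false)).1)) (Sum.inr (Sum.inl (((⟨(i, j), hadj, hij⟩ : P2 G), false)).1)) (Sum.inl (((⟨(i, j), hadj, hij⟩ : P2 G), false))) :=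
          hyslot ((⟨(i, j), hadj, hij⟩ : P2 G), false)
        have h3 := E1 (⟨(i, j), hadj, hij⟩ : P2 G)
        have h4 := hnn01 (Sum.inr (Sum.inl (⟨(i, j), hadj, hij⟩ : P2 G)) : Node G) (Sum.inr (Sum.inl (⟨(i, j), hadj, hij⟩ : P2 G)) : Node G) (Sum.inr (Sum.inl (⟨(i, j), hadj, hij⟩ : P2 G)) : Node G)
        rw [h1, h2]
        linarith
      · subst hij; exact absurd hadj (G.loopless.irrefl i)
      · have hadj' := hadj.symm
        have h1 : y j = x3 (Sum.inr (Sum.inl (((⟨(j, i), hadj', hij⟩ : P2 G), true)).1)) (Sum.inr (Sum.inl (((⟨(j, i), hadj', hij⟩ : P2 G), true)).1)) (Sum.inl (((⟨(j, i), hadj', hij⟩ : P2 G), true))) :=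
          hyslot ((⟨(j, i), hadj', hij⟩ : P2 G), true)
        have h2 : y i = x3 (Sum.inr (Sum.inl (((⟨(j, i), hadj', hij⟩ : P2 G), false)).1)) (Sum.inr (Sum.inl (((⟨(j, i), hadj', hij⟩ : P2 G), false)).1)) (Sum.inl (((⟨(j, i), hadj', hij⟩ : P2 G), false))) :=
          hyslot ((⟨(j, i), hadj', hij⟩ : P2 G), false)
        have h3 := E1 (⟨(j, i), hadj', hij⟩ : P2 G)
        have h4 := hnn01 (Sum.inr (Sum.inl (⟨(j, i), hadj', hij⟩ : P2 G)) : Node G) (Sum.inr (Sum.inl (⟨(j, i), hadj', hij⟩ : P2 G)) : Node G) (Sum.inr (Sum.inl (⟨(j, i), hadj', hij⟩ : P2 G)) : Node G)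
        rw [h1, h2]
        linarith
  -- the main pointwise identity
  have hF1zero : ∀ s u : Node G, ¬ u = s → F1c G s u = 0 → evL y (F1c G s u) = x3 s s u := by
    intro s u h hf
    rw [hf, map_zero]
    exact (hzero _ _ _ (by rw [Fc, if_pos rfl, if_neg h, hf])).symm
  have hF2zero : ∀ s t : Node G, ¬ s = t → F2c G s t = 0 → evL y (F2c G s t) = x3 s t s := by
    intro s t h hf
    rw [hf, map_zero]
    exact (hzero _ _ _ (by rw [Fc, if_neg h, if_pos rfl, hf])).symm
  have hmain : ∀ s t u : Node G, evL y (Fc G s t u) = x3 s t u := by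
    intro s t u
    by_cases hst : s = t
    · subst hst
      by_cases hus : u = s
      · subst hus
        have hFc : Fc G u u u = Dc G u := by rw [Fc, if_pos rfl, if_pos rfl]
        rw [hFc]
        rcases u with σ | p | v | v
        · rw [Dc_N]
          by_cases hps : σ = pf G σ
          · rw [if_pos hps, map_sub, evL_C1, evL_X, hyslot σ]
            have hE4 := E4 σ
            rw [← hps] at hE4
            linarith
          · rw [if_neg hps, map_zero]
            exact (hzero _ _ _ (by rw [Fc, if_pos rfl, if_pos rfl, Dc_N, if_neg hps])).symm
        · rw [Dc_A, map_sub, map_sub, evL_C1, evL_X, evL_X]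
          have h1 : y p.1.1 = x3 (Sum.inr (Sum.inl (((p : P2 G), true)).1)) (Sum.inr (Sum.inl (((p : P2 G), true)).1)) (Sum.inl (((p : P2 G), true))) := hyslot ((p : P2 G), true)
          have h2 : y p.1.2 = x3 (Sum.inr (Sum.inl (((p : P2 G), false)).1)) (Sum.inr (Sum.inl (((p : P2 G), false)).1)) (Sum.inl (((p : P2 G), false))) := hyslot ((p : P2 G), false)
          have h3 := E1 p
          rw [h1, h2]
          linarith
        · rw [Dc_I, map_sub, evL_C1, evL_X, hyiso v]
          linarith [E6 v]
        · rw [Dc_J, map_sub, evL_C1, evL_X, hyiso v]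
          linarith [E8 v, hJI v]
      · have hFc : Fc G s s u = F1c G s u := by rw [Fc, if_pos rfl, if_neg hus]
        rw [hFc]
        rcases s with σ | p | v | v <;> rcases u with τ | q | w | w
        · exact hF1zero _ _ hus rfl
        · -- (nn σ, na q)
          by_cases hq : σ.1 = q
          · have hval : F1c G (Sum.inl σ) (Sum.inr (Sum.inl q)) = Xf (ep G σ) := by
              show (if σ.1 = q then Xf (ep G σ) else 0) = _
              rw [if_pos hq]
            rw [hval, evL_X, hyslot σ, ← hq]
            exact (hQ σ).symm
          · exact hF1zero _ _ hus (by
              show (if σ.1 = q then Xf (ep G σ) else 0) = 0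
              rw [if_neg hq])
        · exact hF1zero _ _ hus rfl
        · exact hF1zero _ _ hus rfl
        · -- (na p, nn τ)
          by_cases hq : τ.1 = p
          · have hval : F1c G (Sum.inr (Sum.inl p)) (Sum.inl τ) = Xf (ep G τ) := by
              show (if τ.1 = p then Xf (ep G τ) else 0) = _
              rw [if_pos hq]
            rw [hval, evL_X, hyslot τ, ← hq]
          · exact hF1zero _ _ hus (by
              show (if τ.1 = p then Xf (ep G τ) else 0) = 0
              rw [if_neg hq])
        · exact hF1zero _ _ hus rfl
        · exact hF1zero _ _ hus rfl
        · exact hF1zero _ _ hus rfl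
        · exact hF1zero _ _ hus rfl
        · exact hF1zero _ _ hus rfl
        · exact hF1zero _ _ hus rfl
        · -- (ni v, nj w)
          by_cases hq : v = w
          · have hval : F1c G (Sum.inr (Sum.inr (Sum.inl v))) (Sum.inr (Sum.inr (Sum.inr w)))
                = Xf v.1 := by
              show (if v = w then Xf v.1 else 0) = _
              rw [if_pos hq]
            rw [hval, evL_X, hyiso v, hq]
          · exact hF1zero _ _ hus (by
              show (if v = w then Xf v.1 else 0) = 0
              rw [if_neg hq])
        · exact hF1zero _ _ hus rfl
        · exact hF1zero _ _ hus rfl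
        · -- (nj v, ni w)
          by_cases hq : w = v
          · have hval : F1c G (Sum.inr (Sum.inr (Sum.inr v))) (Sum.inr (Sum.inr (Sum.inl w)))
                = Xf w.1 := by
              show (if w = v then Xf w.1 else 0) = _
              rw [if_pos hq]
            rw [hval, evL_X, hyiso w, ← hJI w, hq]
          · exact hF1zero _ _ hus (by
              show (if w = v then Xf w.1 else 0) = 0
              rw [if_neg hq])
        · exact hF1zero _ _ hus rfl
    · by_cases hus : u = s
      · subst hus
        have hFc : Fc G u t u = F2c G u t := by rw [Fc, if_neg hst, if_pos rfl]
        rw [hFc]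
        rcases u with σ | p | v | v <;> rcases t with τ | q | w | w
        · by_cases hq : τ = pf G σ
          · have hval : F2c G (Sum.inl σ) (Sum.inl τ) = C1 - Xf (ep G σ) := by
              show (if τ = pf G σ then C1 - Xf (ep G σ) else 0) = _
              rw [if_pos hq]
            rw [hval, map_sub, evL_C1, evL_X, hyslot σ, hq]
            linarith [hRP σ]
          · exact hF2zero _ _ hst (by
              show (if τ = pf G σ then C1 - Xf (ep G σ) else 0) = 0
              rw [if_neg hq])
        all_goals exact hF2zero _ _ hst rfl
      · have hFc : Fc G s t u = 0 := by rw [Fc, if_neg hst, if_neg hus]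
        rw [hFc, map_zero]
        exact (hzero _ _ _ hFc).symm
  refine ⟨y, hySSP, ?_⟩
  funext q
  obtain ⟨a, b, c⟩ := q
  have h1 : phi G e y (a, b, c) = evL y (Fc G (e.symm a) (e.symm b) (e.symm c)) := rfl
  rw [h1, hmain (e.symm a) (e.symm b) (e.symm c)]
  show x (e (e.symm a), e (e.symm b), e (e.symm c)) = x (a, b, c)
  rw [Equiv.apply_symm_apply, Equiv.apply_symm_apply, Equiv.apply_symm_apply]

lemma hull_face {V : Type*} [AddCommGroup V] [Module ℝ V] (S : Set V) (l : V → ℝ)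
    (hlin : IsLinearMap ℝ l) (hS : ∀ z ∈ S, l z ≤ 0) :
    convexHull ℝ S ∩ {z | l z = 0} = convexHull ℝ {z ∈ S | l z = 0} := by
  classical
  set lm : V →ₗ[ℝ] ℝ := IsLinearMap.mk' l hlin with hlm
  have hlml : ∀ z, lm z = l z := fun z => rfl
  apply Set.Subset.antisymm
  · rintro x ⟨hxh, hx0⟩
    rw [_root_.convexHull_eq] at hxh
    obtain ⟨ι, t, w, z, hw0, hw1, hzS, hxc⟩ := hxh
    have hc : t.centerMass w z = ∑ i ∈ t, w i • z i := Finset.centerMass_eq_of_sum_1 _ _ hw1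
    have hlx : ∑ i ∈ t, w i * l (z i) = 0 := by
      have hx0' : lm x = 0 := hx0
      rw [← hxc, hc, map_sum] at hx0'
      simpa [hlml, hlin.map_smul, smul_eq_mul] using hx0'
    have hterm : ∀ i ∈ t, w i * l (z i) = 0 := by
      refine (Finset.sum_eq_zero_iff_of_nonpos ?_).mp hlx
      intro j hj
      exact mul_nonpos_iff.mpr (Or.inl ⟨hw0 j hj, hS _ (hzS j hj)⟩)
    set t' := t.filter (fun i => w i ≠ 0) with ht'
    have hsub : t' ⊆ t := Finset.filter_subset _ _
    have hw1' : ∑ i ∈ t', w i = 1 := by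
      rw [ht', Finset.sum_filter_ne_zero, hw1]
    have hx' : x = ∑ i ∈ t', w i • z i := by
      rw [← hxc, hc]
      refine (Finset.sum_subset hsub ?_).symm
      intro i hi hni
      have hwi : w i = 0 := by
        by_contra hwi
        exact hni (Finset.mem_filter.2 ⟨hi, hwi⟩)
      rw [hwi, zero_smul]
    have hmem : ∀ i ∈ t', z i ∈ {z ∈ S | l z = 0} := by
      intro i hi
      rw [ht', Finset.mem_filter] at hi
      refine ⟨hzS i hi.1, ?_⟩
      rcases mul_eq_zero.mp (hterm i hi.1) with h | h
      · exact absurd h hi.2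
      · exact h
    have hxc' : x = t'.centerMass w z := by
      rw [Finset.centerMass_eq_of_sum_1 _ _ hw1', hx']
    rw [hxc']
    exact Finset.centerMass_mem_convexHull t' (fun i hi => hw0 i (hsub hi))
      (by rw [hw1']; norm_num) hmem
  · refine Set.subset_inter ?_ ?_
    · exact convexHull_mono (Set.sep_subset _ _)
    · refine convexHull_min (fun z hz => hz.2) ?_
      have : {z : V | l z = 0} = lm ⁻¹' {0} := rfl
      rw [this]
      exact (convex_singleton (0 : ℝ)).linear_preimage lm

lemma card_P2 : Fintype.card (P2 G) = G.edgeFinset.card := by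
  rw [Fintype.card_subtype]
  refine Finset.card_bij (fun p _ => s(p.1, p.2)) ?_ ?_ ?_
  · intro p hp
    simp only [Finset.mem_filter, Finset.mem_univ, true_and] at hp
    rw [SimpleGraph.mem_edgeFinset]
    exact hp.1
  · intro p hp q hq hpq
    simp only [Finset.mem_filter, Finset.mem_univ, true_and] at hp hq
    rcases Sym2.mk_eq_mk_iff.mp hpq with h | h
    · exact h
    · exfalso
      have h1 : p.1 = q.2 := by rw [h, Prod.fst_swap]
      have h2 : p.2 = q.1 := by rw [h, Prod.snd_swap]
      rw [h1, h2] at hp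
      exact absurd hq.2 (not_lt.2 (le_of_lt hp.2))
  · intro b hb
    rw [SimpleGraph.mem_edgeFinset] at hb
    revert hb
    refine Sym2.inductionOn b (fun a c => ?_)
    intro hb
    rw [SimpleGraph.mem_edgeSet] at hb
    rcases lt_trichotomy a c with h | h | h
    · exact ⟨(a, c), by simp [hb, h], rfl⟩
    · exact absurd hb (by rw [h]; exact G.loopless.irrefl c)
    · exact ⟨(c, a), by simp [hb.symm, h], Sym2.eq_swap⟩

lemma card_Node :
    Fintype.card (Node G) = 3 * G.edgeFinset.card +
      2 * (Finset.univ.filter (fun v : Fin k => ∀ w, ¬ G.Adj v w)).card := by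
  have h1 := card_P2 G
  have h2 : Fintype.card (IsoT G)
      = (Finset.univ.filter (fun v : Fin k => ∀ w, ¬ G.Adj v w)).card :=
    Fintype.card_subtype _
  simp only [Node, Slot, Fintype.card_sum, Fintype.card_prod, Fintype.card_bool, h1, h2]
  ring

lemma phi_inj {m : ℕ} (e : Node G ≃ Fin m) : Function.Injective (phi G e) := by
  intro y y' h
  funext i
  by_cases hv : ∀ w, ¬ G.Adj i w
  · set v : IsoT G := ⟨i, hv⟩ with hvdef
    have hval : Fc G (Sum.inr (Sum.inr (Sum.inl v))) (Sum.inr (Sum.inr (Sum.inl v)))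
        (Sum.inr (Sum.inr (Sum.inr v))) = Xf v.1 := by
      rw [Fc, if_pos rfl, if_neg (by simp)]
      show (if v = v then Xf v.1 else 0) = _
      rw [if_pos rfl]
    have h1 := congrFun h
      (e (Sum.inr (Sum.inr (Sum.inl v))), e (Sum.inr (Sum.inr (Sum.inl v))),
        e (Sum.inr (Sum.inr (Sum.inr v))))
    simp only [phi_apply, FcQ, Equiv.symm_apply_apply] at h1
    rw [hval, evL_X, evL_X] at h1
    exact h1
  · push_neg at hv
    obtain ⟨w, hw⟩ := hv
    rcases lt_trichotomy i w with hlt | hlt | hlt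
    · set σ : Slot G := ((⟨(i, w), hw, hlt⟩ : P2 G), true) with hσdef
      have hval : Fc G (Sum.inr (Sum.inl σ.1)) (Sum.inr (Sum.inl σ.1)) (Sum.inl σ)
          = Xf (ep G σ) := by
        rw [Fc, if_pos rfl, if_neg (by simp)]
        show (if σ.1 = σ.1 then Xf (ep G σ) else 0) = _
        rw [if_pos rfl]
      have h1 := congrFun h
        (e (Sum.inr (Sum.inl σ.1)), e (Sum.inr (Sum.inl σ.1)), e (Sum.inl σ))
      simp only [phi_apply, FcQ, Equiv.symm_apply_apply] at h1
      rw [hval, evL_X, evL_X] at h1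
      exact h1
    · exact absurd hw (by rw [hlt]; exact G.loopless.irrefl w)
    · set σ : Slot G := ((⟨(w, i), hw.symm, hlt⟩ : P2 G), false) with hσdef
      have hval : Fc G (Sum.inr (Sum.inl σ.1)) (Sum.inr (Sum.inl σ.1)) (Sum.inl σ)
          = Xf (ep G σ) := by
        rw [Fc, if_pos rfl, if_neg (by simp)]
        show (if σ.1 = σ.1 then Xf (ep G σ) else 0) = _
        rw [if_pos rfl]
      have h1 := congrFun h
        (e (Sum.inr (Sum.inl σ.1)), e (Sum.inr (Sum.inl σ.1)), e (Sum.inl σ))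
      simp only [phi_apply, FcQ, Equiv.symm_apply_apply] at h1
      rw [hval, evL_X, evL_X] at h1
      exact h1

end Stmt9

/-- For every graph `G` on `k` vertices, with `E` its edge set and `W` its set of
isolated vertices, and `m = 3|E| + 2|W|`, the polytope `conv(SSP(G))` is affinely
equivalent to an exposed face of `conv(TAP_m)`. -/
theorem stmt9 (k : ℕ) (G : SimpleGraph (Fin k)) [DecidableRel G.Adj] :
    ∀ m : ℕ,
      m = 3 * G.edgeFinset.card +
          2 * (Finset.univ.filter (fun v : Fin k => ∀ w, ¬ G.Adj v w)).card →
      ∃ F : Set (Fin m × Fin m × Fin m → ℝ),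
        IsExposed ℝ (convexHull ℝ (TAP m)) F ∧
        ∃ φ : (Fin k → ℝ) →ᵃ[ℝ] (Fin m × Fin m × Fin m → ℝ),
          Function.Injective φ ∧ φ '' (convexHull ℝ (SSP G)) = F := by
  intro m hm
  classical
  have hcard : Fintype.card (Stmt9.Node G) = m := by
    rw [Stmt9.card_Node, hm]
  set e : Stmt9.Node G ≃ Fin m := Fintype.equivFinOfCardEq hcard with hedef
  refine ⟨{x ∈ convexHull ℝ (TAP m) |
      ∀ z ∈ convexHull ℝ (TAP m), Stmt9.ell G e z ≤ Stmt9.ell G e x},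
    fun _ => ⟨Stmt9.ell G e, rfl⟩, Stmt9.phi G e, Stmt9.phi_inj G e, ?_⟩
  have h0SSP : (0 : Fin k → ℝ) ∈ SSP G :=
    ⟨fun i => Or.inl rfl, fun i j _ => by norm_num⟩
  have hhull0 : ∀ z ∈ convexHull ℝ (TAP m), Stmt9.ell G e z ≤ 0 := by
    intro z hz
    refine convexHull_min (fun z' hz' => Stmt9.ell_nonpos G e hz') ?_ hz
    exact convex_halfSpace_le (Stmt9.ell G e).toLinearMap.isLinear 0
  have hFeq : {x ∈ convexHull ℝ (TAP m) |
        ∀ z ∈ convexHull ℝ (TAP m), Stmt9.ell G e z ≤ Stmt9.ell G e x}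
      = convexHull ℝ (TAP m) ∩ {z | Stmt9.ell G e z = 0} := by
    ext z
    constructor
    · rintro ⟨hz, hmax⟩
      refine ⟨hz, le_antisymm (hhull0 z hz) ?_⟩
      have h2 := hmax (Stmt9.phi G e 0)
        (subset_convexHull ℝ _ (Stmt9.phi_mem_TAP G e h0SSP))
      rwa [Stmt9.ell_phi] at h2
    · rintro ⟨hz, h0⟩
      refine ⟨hz, fun z' hz' => ?_⟩
      rw [h0]
      exact hhull0 z' hz'
  have hvert : Stmt9.phi G e '' SSP G = {z ∈ TAP m | Stmt9.ell G e z = 0} := by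
    apply Set.Subset.antisymm
    · rintro _ ⟨y, hy, rfl⟩
      exact ⟨Stmt9.phi_mem_TAP G e hy, Stmt9.ell_phi G e y⟩
    · rintro z ⟨hz1, hz2⟩
      obtain ⟨y, hy, hyz⟩ := Stmt9.converse G e z hz1 hz2
      exact ⟨y, hy, hyz⟩
  have hface := Stmt9.hull_face (TAP m) (Stmt9.ell G e)
    (Stmt9.ell G e).toLinearMap.isLinear (fun z hz => Stmt9.ell_nonpos G e hz)
  rw [AffineMap.image_convexHull, hvert, ← hface, hFeq]
end

section
/- For every p ≥ 3 and every m ∈ ℕ, the set F = conv(PAP^p_m) ∩ {x : x_{i_1,…,i_p} = 0 for every tuple with i_p ≠ i_{p-1}} is an exposed face of the p-index assignment polytope conv(PAP^p_m), and F is affinely equivalent to the (p−1)-index assignment polytope conv(PAP^{p−1}_m): there is an injective affine map φ from ℝ^{(Fin m)^{p−1} → ℝ} with φ(conv(PAP^{p−1}_m)) = F. -/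
/-- The vertex set of the `p`-index assignment polytope: 0/1 vectors
`x : (Fin m)^p → ℝ` such that, for each axis `r` and value `v`, the sum of `x`
over all tuples whose `r`-th entry is `v` equals 1. -/
def PAP (p m : ℕ) : Set ((Fin p → Fin m) → ℝ) :=
  {x | (∀ t, x t = 0 ∨ x t = 1) ∧
       ∀ (r : Fin p) (v : Fin m),
         ∑ t ∈ Finset.univ.filter (fun t : Fin p → Fin m => t r = v), x t = 1}

namespace Stmt11Aux

variable {p m : ℕ}

/-- extension map -/
def up (hp : 3 ≤ p) (s : Fin (p - 1) → Fin m) : Fin p → Fin m :=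
  fun i => s ⟨min i.val (p - 2), by omega⟩

/-- restriction map -/
def down (hp : 3 ≤ p) (t : Fin p → Fin m) : Fin (p - 1) → Fin m :=
  fun i => t (Fin.castLE (Nat.sub_le p 1) i)

lemma up_good (hp : 3 ≤ p) (s : Fin (p - 1) → Fin m) :
    up hp s ⟨p - 1, by have := hp; omega⟩ = up hp s ⟨p - 2, by have := hp; omega⟩ := by
  simp only [up]
  congr 1
  ext
  simp
  omega

lemma down_up (hp : 3 ≤ p) (s : Fin (p - 1) → Fin m) : down hp (up hp s) = s := by
  funext i
  simp only [down, up, Fin.castLE]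
  congr 1
  have := i.isLt
  ext
  simp
  omega

lemma up_down (hp : 3 ≤ p) (t : Fin p → Fin m)
    (ht : t ⟨p - 1, by have := hp; omega⟩ = t ⟨p - 2, by have := hp; omega⟩) : up hp (down hp t) = t := by
  funext i
  simp only [down, up, Fin.castLE]
  rcases Nat.lt_or_ge i.val (p - 1) with h | h
  · congr 1
    ext
    simp
    omega
  · have hi : i = ⟨p - 1, by have := hp; omega⟩ := by ext; have := i.isLt; simp; omega
    rw [hi]
    have : (⟨min ((⟨p - 1, by have := hp; omega⟩ : Fin p) : ℕ) (p - 2), by omega⟩ : Fin p)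
        = ⟨p - 2, by have := hp; omega⟩ := by ext; simp; omega
    rw [this, ht]

/-- the linear embedding -/
def phi (hp : 3 ≤ p) : ((Fin (p - 1) → Fin m) → ℝ) →ₗ[ℝ] ((Fin p → Fin m) → ℝ) where
  toFun y := fun t => if t ⟨p - 1, by have := hp; omega⟩ = t ⟨p - 2, by have := hp; omega⟩ then y (down hp t) else 0
  map_add' y z := by funext t; by_cases h : t ⟨p - 1, by have := hp; omega⟩ = t ⟨p - 2, by have := hp; omega⟩ <;>
    simp [h]
  map_smul' c y := by funext t; by_cases h : t ⟨p - 1, by have := hp; omega⟩ = t ⟨p - 2, by have := hp; omega⟩ <;>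
    simp [h]

lemma phi_up (hp : 3 ≤ p) (y : (Fin (p - 1) → Fin m) → ℝ) (s : Fin (p - 1) → Fin m) :
    phi hp y (up hp s) = y s := by
  simp only [phi, LinearMap.coe_mk, AddHom.coe_mk]
  rw [if_pos (up_good hp s), down_up]

lemma phi_bad (hp : 3 ≤ p) (y : (Fin (p - 1) → Fin m) → ℝ) (t : Fin p → Fin m)
    (ht : t ⟨p - 1, by have := hp; omega⟩ ≠ t ⟨p - 2, by have := hp; omega⟩) : phi hp y t = 0 := by
  simp only [phi, LinearMap.coe_mk, AddHom.coe_mk]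
  rw [if_neg ht]

/-- key sum reindexing lemma -/
lemma sum_key (hp : 3 ≤ p) (x : (Fin p → Fin m) → ℝ)
    (hx : ∀ t : Fin p → Fin m, t ⟨p - 1, by have := hp; omega⟩ ≠ t ⟨p - 2, by have := hp; omega⟩ → x t = 0)
    (f : (Fin p → Fin m) → Prop) [DecidablePred f] :
    ∑ t ∈ Finset.univ.filter f, x t
      = ∑ s ∈ Finset.univ.filter (fun s => f (up hp s)), x (up hp s) := by
  classical
  have h1 : ∑ t ∈ Finset.univ.filter f, x t
      = ∑ t ∈ Finset.univ.filter
          (fun t : Fin p → Fin m => f t ∧ t ⟨p - 1, by have := hp; omega⟩ = t ⟨p - 2, by have := hp; omega⟩), x t := by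
    refine (Finset.sum_subset ?_ ?_).symm
    · intro t ht
      simp only [Finset.mem_filter, Finset.mem_univ, true_and] at ht ⊢
      exact ht.1
    · intro t ht hnt
      simp only [Finset.mem_filter, Finset.mem_univ, true_and] at ht hnt
      exact hx t (fun hg => hnt ⟨ht, hg⟩)
  rw [h1]
  refine Finset.sum_nbij' (fun t => down hp t) (fun s => up hp s) ?_ ?_ ?_ ?_ ?_
  · intro t ht
    simp only [Finset.mem_filter, Finset.mem_univ, true_and] at ht ⊢
    rw [up_down hp t ht.2]
    exact ht.1
  · intro s hs
    simp only [Finset.mem_filter, Finset.mem_univ, true_and] at hs ⊢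
    exact ⟨hs, up_good hp s⟩
  · intro t ht
    simp only [Finset.mem_filter, Finset.mem_univ, true_and] at ht
    exact up_down hp t ht.2
  · intro s _
    exact down_up hp s
  · intro t ht
    simp only [Finset.mem_filter, Finset.mem_univ, true_and] at ht
    rw [up_down hp t ht.2]

lemma phi_mem_PAP (hp : 3 ≤ p) {x : (Fin (p - 1) → Fin m) → ℝ} (hx : x ∈ PAP (p - 1) m) :
    phi hp x ∈ PAP p m := by
  classical
  constructor
  · intro t
    by_cases h : t ⟨p - 1, by have := hp; omega⟩ = t ⟨p - 2, by have := hp; omega⟩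
    · simpa [phi, h] using hx.1 (down hp t)
    · left; exact phi_bad hp x t h
  · intro r v
    rw [sum_key hp (phi hp x) (fun t ht => phi_bad hp x t ht) (fun t => t r = v)]
    have hmin : min r.val (p - 2) < p - 1 := by have := r.isLt; omega
    have heq : ∀ s : Fin (p - 1) → Fin m,
        (up hp s r = v) ↔ s ⟨min r.val (p - 2), hmin⟩ = v := by
      intro s; rfl
    calc ∑ s ∈ Finset.univ.filter (fun s => up hp s r = v), phi hp x (up hp s)
        = ∑ s ∈ Finset.univ.filter
            (fun s : Fin (p - 1) → Fin m => s ⟨min r.val (p - 2), hmin⟩ = v), x s := by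
          refine Finset.sum_congr ?_ ?_
          · apply Finset.filter_congr
            intro s _
            simp [heq s]
          · intro s _
            exact phi_up hp x s
      _ = 1 := hx.2 ⟨min r.val (p - 2), hmin⟩ v

lemma down_mem_PAP (hp : 3 ≤ p) {x : (Fin p → Fin m) → ℝ} (hx : x ∈ PAP p m)
    (hx0 : ∀ t : Fin p → Fin m, t ⟨p - 1, by have := hp; omega⟩ ≠ t ⟨p - 2, by have := hp; omega⟩ → x t = 0) :
    (fun s => x (up hp s)) ∈ PAP (p - 1) m ∧ phi hp (fun s => x (up hp s)) = x := by
  classical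
  constructor
  · constructor
    · intro s; exact hx.1 (up hp s)
    · intro r v
      have hr : (Fin.castLE (Nat.sub_le p 1) r : Fin p).val < p - 1 := by
        simpa using r.isLt
      have key := sum_key hp x hx0 (fun t => t (Fin.castLE (Nat.sub_le p 1) r) = v)
      have heq : ∀ s : Fin (p - 1) → Fin m,
          (up hp s (Fin.castLE (Nat.sub_le p 1) r) = v) ↔ s r = v := by
        intro s
        have : (⟨min ((Fin.castLE (Nat.sub_le p 1) r) : Fin p).val (p - 2), by omega⟩ :
            Fin (p - 1)) = r := by
          ext; have := r.isLt; simp [Fin.castLE]; omega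
        simp only [up, this]
      calc ∑ s ∈ Finset.univ.filter (fun s : Fin (p - 1) → Fin m => s r = v), x (up hp s)
          = ∑ s ∈ Finset.univ.filter
              (fun s => up hp s (Fin.castLE (Nat.sub_le p 1) r) = v), x (up hp s) := by
            apply Finset.sum_congr _ (fun _ _ => rfl)
            apply Finset.filter_congr
            intro s _
            simp [heq s]
        _ = ∑ t ∈ Finset.univ.filter
              (fun t : Fin p → Fin m => t (Fin.castLE (Nat.sub_le p 1) r) = v), x t := key.symm
        _ = 1 := hx.2 (Fin.castLE (Nat.sub_le p 1) r) v
  · funext t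
    by_cases h : t ⟨p - 1, by have := hp; omega⟩ = t ⟨p - 2, by have := hp; omega⟩
    · simp only [phi, LinearMap.coe_mk, AddHom.coe_mk, if_pos h]
      rw [up_down hp t h]
    · rw [phi_bad hp _ t h, hx0 t h]

lemma conv_nonneg {q : ℕ} {x : (Fin q → Fin m) → ℝ} (hx : x ∈ convexHull ℝ (PAP q m))
    (t : Fin q → Fin m) : 0 ≤ x t := by
  have hconv : Convex ℝ {y : (Fin q → Fin m) → ℝ | ∀ t, 0 ≤ y t} := by
    intro a ha b hb u v hu hv huv t
    have : (u • a + v • b) t = u * a t + v * b t := by simp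
    rw [this]
    exact add_nonneg (mul_nonneg hu (ha t)) (mul_nonneg hv (hb t))
  have hsub : PAP q m ⊆ {y : (Fin q → Fin m) → ℝ | ∀ t, 0 ≤ y t} := by
    intro y hy t
    rcases hy.1 t with h | h <;> simp [h]
  exact convexHull_min hsub hconv hx t

lemma conv_inter_sub (hp : 3 ≤ p) :
    convexHull ℝ (PAP p m) ∩
      {x | ∀ t : Fin p → Fin m, t ⟨p - 1, by have := hp; omega⟩ ≠ t ⟨p - 2, by have := hp; omega⟩ → x t = 0} ⊆
    convexHull ℝ (PAP p m ∩
      {x | ∀ t : Fin p → Fin m, t ⟨p - 1, by have := hp; omega⟩ ≠ t ⟨p - 2, by have := hp; omega⟩ → x t = 0}) := by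
  classical
  rintro x ⟨hx, hx0⟩
  rw [convexHull_eq] at hx
  obtain ⟨ι, s, w, z, hw0, hw1, hz, hcm⟩ := hx
  have hzero : ∀ i ∈ s, w i ≠ 0 → z i ∈
      {x | ∀ t : Fin p → Fin m, t ⟨p - 1, by have := hp; omega⟩ ≠ t ⟨p - 2, by have := hp; omega⟩ → x t = 0} := by
    intro i hi hwi t ht
    have hxt : x t = 0 := hx0 t ht
    have hx_eq : x t = ∑ j ∈ s, w j * z j t := by
      rw [← hcm, Finset.centerMass, hw1, inv_one, one_smul]
      simp [Finset.sum_apply]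
    have hterms : ∀ j ∈ s, 0 ≤ w j * z j t := by
      intro j hj
      refine mul_nonneg (hw0 j hj) ?_
      rcases (hz j hj).1 t with h | h <;> simp [h]
    have hsum0 : ∑ j ∈ s, w j * z j t = 0 := by rw [← hx_eq, hxt]
    have := (Finset.sum_eq_zero_iff_of_nonneg hterms).1 hsum0 i hi
    rcases mul_eq_zero.1 this with h | h
    · exact absurd h hwi
    · exact h
  rw [← hcm, ← Finset.centerMass_filter_ne_zero]
  refine Finset.centerMass_mem_convexHull _ ?_ ?_ ?_
  · intro i hi
    exact hw0 i (Finset.mem_filter.1 hi).1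
  · rw [Finset.sum_filter_ne_zero, hw1]; exact one_pos
  · intro i hi
    rw [Finset.mem_filter] at hi
    exact ⟨hz i hi.1, hzero i hi.1 hi.2⟩

end Stmt11Aux

open Stmt11Aux in
/-- For `p ≥ 3`, the set `F` of points of `conv(PAP^p_m)` vanishing on all tuples
whose `p`-th entry differs from the `(p−1)`-st is an exposed face of
`conv(PAP^p_m)`, affinely equivalent to `conv(PAP^{p−1}_m)`. -/
theorem stmt11 (p m : ℕ) (hp : 3 ≤ p) :
    IsExposed ℝ (convexHull ℝ (PAP p m))
      (convexHull ℝ (PAP p m) ∩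
        {x | ∀ t : Fin p → Fin m,
          t ⟨p - 1, by omega⟩ ≠ t ⟨p - 2, by omega⟩ → x t = 0}) ∧
    ∃ φ : ((Fin (p - 1) → Fin m) → ℝ) →ᵃ[ℝ] ((Fin p → Fin m) → ℝ),
      Function.Injective φ ∧
      φ '' (convexHull ℝ (PAP (p - 1) m)) =
        convexHull ℝ (PAP p m) ∩
          {x | ∀ t : Fin p → Fin m,
            t ⟨p - 1, by omega⟩ ≠ t ⟨p - 2, by omega⟩ → x t = 0} := by
  classical
  set F0 : Set ((Fin p → Fin m) → ℝ) :=
    {x | ∀ t : Fin p → Fin m, t ⟨p - 1, by omega⟩ ≠ t ⟨p - 2, by omega⟩ → x t = 0} with hF0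
  set badF : Finset (Fin p → Fin m) :=
    Finset.univ.filter (fun t : Fin p → Fin m => ¬ t ⟨p - 1, by omega⟩ = t ⟨p - 2, by omega⟩)
    with hbadF
  constructor
  · -- exposedness
    intro ⟨x0, hx0⟩
    refine ⟨LinearMap.toContinuousLinearMap
      { toFun := fun y => -∑ t ∈ badF, y t
        map_add' := by intros; simp [Finset.sum_add_distrib]; ring
        map_smul' := by intros; simp [Finset.mul_sum] }, ?_⟩
    ext x
    simp only [Set.mem_inter_iff, Set.mem_setOf_eq, LinearMap.coe_toContinuousLinearMap',
      LinearMap.coe_mk, AddHom.coe_mk, neg_le_neg_iff]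
    constructor
    · rintro ⟨hxA, hxF⟩
      refine ⟨hxA, ?_⟩
      intro y hy
      have hxval : ∑ t ∈ badF, x t = 0 := by
        apply Finset.sum_eq_zero
        intro t ht
        rw [hbadF, Finset.mem_filter] at ht
        exact hxF t ht.2
      have hyval : 0 ≤ ∑ t ∈ badF, y t :=
        Finset.sum_nonneg fun t _ => conv_nonneg hy t
      rw [hxval]
      linarith
    · rintro ⟨hxA, hmax⟩
      refine ⟨hxA, ?_⟩
      have hx0val : ∑ t ∈ badF, x0 t = 0 := by
        apply Finset.sum_eq_zero
        intro t ht
        rw [hbadF, Finset.mem_filter] at ht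
        exact hx0.2 t ht.2
      have h1 : ∑ t ∈ badF, x t ≤ ∑ t ∈ badF, x0 t := hmax x0 hx0.1
      have h2 : ∑ t ∈ badF, x t ≤ 0 := by rw [hx0val] at h1; linarith
      have h3 : ∑ t ∈ badF, x t = 0 :=
        le_antisymm h2 (Finset.sum_nonneg fun t _ => conv_nonneg hxA t)
      intro t ht
      have := (Finset.sum_eq_zero_iff_of_nonneg
        (fun t _ => conv_nonneg hxA t)).1 h3 t
        (by rw [hbadF]; simp [ht])
      exact this
  · -- affine equivalence
    refine ⟨(phi hp).toAffineMap, ?_, ?_⟩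
    · intro y z hyz
      funext s
      have := congrFun hyz (up hp s)
      simpa only [LinearMap.coe_toAffineMap, phi_up] using this
    · apply Set.Subset.antisymm
      · rintro _ ⟨y, hy, rfl⟩
        constructor
        · rw [LinearMap.coe_toAffineMap]
          have : phi hp y ∈ phi hp '' (convexHull ℝ (PAP (p - 1) m)) := ⟨y, hy, rfl⟩
          rw [LinearMap.image_convexHull] at this
          refine convexHull_mono ?_ this
          rintro _ ⟨z, hz, rfl⟩
          exact phi_mem_PAP hp hz
        · intro t ht
          rw [LinearMap.coe_toAffineMap]
          exact phi_bad hp y t ht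
      · intro x hx
        have hx' : x ∈ convexHull ℝ (PAP p m ∩ F0) := conv_inter_sub hp hx
        have himg : PAP p m ∩ F0 ⊆ phi (m := m) hp '' (PAP (p - 1) m) := by
          rintro z ⟨hz, hz0⟩
          obtain ⟨h1, h2⟩ := down_mem_PAP hp hz hz0
          exact ⟨fun s => z (up hp s), h1, h2⟩
        have : x ∈ convexHull ℝ (phi (m := m) hp '' (PAP (p - 1) m)) :=
          convexHull_mono himg hx'
        rw [← LinearMap.image_convexHull] at this
        obtain ⟨y, hy, hyx⟩ := this
        exact ⟨y, hy, hyx⟩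
end
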